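/- arXiv:2209.07243 — 8 statements merged into one kernel-verified Lean document; each statement's English description precedes it below -/
import Mathlib

section
/- For jointly distributed random variables ξ₁, ξ₂, ξ₃ with finite ranges, 2·H(ξ₁, ξ₂, ξ₃) ≤ H(ξ₁, ξ₂) + H(ξ₁, ξ₃) + H(ξ₂, ξ₃). -/
open scoped Classical BigOperators

/-- Probability that the random variable `ξ` takes the value `s`. -/
noncomputable def probOf {Ω S : Type*} [Fintype Ω] (p : Ω → ℝ) (ξ : Ω → S) (s : S) : ℝ :=
  ∑ ω ∈ Finset.univ.filter (fun ω => ξ ω = s), p ω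

/-- Shannon entropy of a random variable with finite range. -/
noncomputable def shannonEntropy {Ω S : Type*} [Fintype Ω] (p : Ω → ℝ) (ξ : Ω → S) : ℝ :=
  -∑ s ∈ Finset.univ.image ξ, probOf p ξ s * Real.log (probOf p ξ s)

lemma probOf_nonneg {Ω S : Type*} [Fintype Ω] {p : Ω → ℝ} (hp : ∀ ω, 0 ≤ p ω) (ξ : Ω → S) (s : S) :
    0 ≤ probOf p ξ s := Finset.sum_nonneg fun ω _ => hp ω

lemma sum_weighted {Ω S : Type*} [Fintype Ω] (p : Ω → ℝ) (ξ : Ω → S) (f : S → ℝ) :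
    ∑ s ∈ Finset.univ.image ξ, probOf p ξ s * f s = ∑ ω, p ω * f (ξ ω) := by
  unfold probOf
  rw [← Finset.sum_fiberwise_of_maps_to (g := ξ)
    (fun ω _ => Finset.mem_image_of_mem ξ (Finset.mem_univ ω)) (fun ω => p ω * f (ξ ω))]
  refine Finset.sum_congr rfl fun s _ => ?_
  rw [Finset.sum_mul]
  refine Finset.sum_congr rfl fun ω hω => ?_
  rw [(Finset.mem_filter.mp hω).2]

lemma shannonEntropy_eq {Ω S : Type*} [Fintype Ω] (p : Ω → ℝ) (ξ : Ω → S) :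
    shannonEntropy p ξ = -∑ ω, p ω * Real.log (probOf p ξ (ξ ω)) := by
  rw [shannonEntropy, sum_weighted p ξ (fun s => Real.log (probOf p ξ s))]

lemma probOf_eq_zero {Ω S : Type*} [Fintype Ω] {p : Ω → ℝ} {ξ : Ω → S} {s : S}
    (hs : s ∉ Finset.univ.image ξ) : probOf p ξ s = 0 := by
  apply Finset.sum_eq_zero
  intro ω hω
  exact absurd (Finset.mem_image.mpr ⟨ω, Finset.mem_univ ω, (Finset.mem_filter.mp hω).2⟩) hs

lemma sum_probOf {Ω S : Type*} [Fintype Ω] {p : Ω → ℝ} (hsum : ∑ ω, p ω = 1) (ξ : Ω → S)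
    (G : Finset S) (hG : Finset.univ.image ξ ⊆ G) : ∑ s ∈ G, probOf p ξ s = 1 := by
  rw [← Finset.sum_subset hG (fun s _ hs => probOf_eq_zero hs)]
  have h := sum_weighted p ξ (fun _ => 1)
  simpa [hsum] using h

lemma probOf_le_probOf {Ω S U : Type*} [Fintype Ω] {p : Ω → ℝ} (hp : ∀ ω, 0 ≤ p ω)
    {ξ : Ω → S} {η : Ω → U} {s : S} {u : U} (h : ∀ ω, ξ ω = s → η ω = u) :
    probOf p ξ s ≤ probOf p η u := by
  apply Finset.sum_le_sum_of_subset_of_nonneg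
  · intro ω hω
    exact Finset.mem_filter.mpr ⟨Finset.mem_univ ω, h ω (Finset.mem_filter.mp hω).2⟩
  · exact fun ω _ _ => hp ω

lemma sum_sqrt_mul_le {ι : Type*} (s : Finset ι) (u v : ι → ℝ)
    (hu : ∀ i ∈ s, 0 ≤ u i) (hv : ∀ i ∈ s, 0 ≤ v i) :
    ∑ i ∈ s, Real.sqrt (u i * v i) ≤ Real.sqrt (∑ i ∈ s, u i) * Real.sqrt (∑ i ∈ s, v i) := by
  have h1 : ∑ i ∈ s, Real.sqrt (u i * v i) = ∑ i ∈ s, Real.sqrt (u i) * Real.sqrt (v i) :=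
    Finset.sum_congr rfl fun i hi => Real.sqrt_mul (hu i hi) _
  rw [h1, ← Real.sqrt_mul (Finset.sum_nonneg hu)]
  rw [Real.le_sqrt (Finset.sum_nonneg fun i _ => mul_nonneg (Real.sqrt_nonneg _) (Real.sqrt_nonneg _))]
  have h2 := Finset.sum_mul_sq_le_sq_mul_sq s (fun i => Real.sqrt (u i)) (fun i => Real.sqrt (v i))
  calc (∑ i ∈ s, Real.sqrt (u i) * Real.sqrt (v i)) ^ 2
      ≤ (∑ i ∈ s, Real.sqrt (u i) ^ 2) * ∑ i ∈ s, Real.sqrt (v i) ^ 2 := h2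
    _ = (∑ i ∈ s, u i) * ∑ i ∈ s, v i := by
        rw [Finset.sum_congr rfl fun i hi => Real.sq_sqrt (hu i hi),
            Finset.sum_congr rfl fun i hi => Real.sq_sqrt (hv i hi)]
  exact mul_nonneg (Finset.sum_nonneg hu) (Finset.sum_nonneg hv)

theorem entropy_shearer {Ω S₁ S₂ S₃ : Type*} [Fintype Ω] (p : Ω → ℝ)
    (hp : ∀ ω, 0 ≤ p ω) (hsum : ∑ ω, p ω = 1)
    (ξ₁ : Ω → S₁) (ξ₂ : Ω → S₂) (ξ₃ : Ω → S₃) :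
    2 * shannonEntropy p (fun ω => (ξ₁ ω, ξ₂ ω, ξ₃ ω)) ≤
      shannonEntropy p (fun ω => (ξ₁ ω, ξ₂ ω)) + shannonEntropy p (fun ω => (ξ₁ ω, ξ₃ ω)) +
      shannonEntropy p (fun ω => (ξ₂ ω, ξ₃ ω)) := by
  classical
  set ξ : Ω → S₁ × S₂ × S₃ := fun ω => (ξ₁ ω, ξ₂ ω, ξ₃ ω) with hξdef
  set A : S₁ × S₂ → ℝ := probOf p (fun ω => (ξ₁ ω, ξ₂ ω)) with hAdef
  set B : S₁ × S₃ → ℝ := probOf p (fun ω => (ξ₁ ω, ξ₃ ω)) with hBdef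
  set C : S₂ × S₃ → ℝ := probOf p (fun ω => (ξ₂ ω, ξ₃ ω)) with hCdef
  set Q : S₁ × S₂ × S₃ → ℝ := probOf p ξ with hQdef
  set T₁ : Finset S₁ := Finset.univ.image ξ₁ with hT₁def
  set T₂ : Finset S₂ := Finset.univ.image ξ₂ with hT₂def
  set T₃ : Finset S₃ := Finset.univ.image ξ₃ with hT₃def
  set Sq : S₁ × S₂ × S₃ → ℝ :=
    fun t => Real.sqrt (A (t.1, t.2.1) * (B (t.1, t.2.2) * C t.2)) with hSqdef
  set F : S₁ × S₂ × S₃ → ℝ := fun t =>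
    Real.log (A (t.1, t.2.1)) + Real.log (B (t.1, t.2.2)) + Real.log (C t.2)
      - 2 * Real.log (Q t) with hFdef
  have hA0 : ∀ t, 0 ≤ A t := fun t => probOf_nonneg hp _ t
  have hB0 : ∀ t, 0 ≤ B t := fun t => probOf_nonneg hp _ t
  have hC0 : ∀ t, 0 ≤ C t := fun t => probOf_nonneg hp _ t
  have hQ0 : ∀ t, 0 ≤ Q t := fun t => probOf_nonneg hp _ t
  have hQA : ∀ t : S₁ × S₂ × S₃, Q t ≤ A (t.1, t.2.1) :=
    fun t => probOf_le_probOf hp (fun ω hω => by subst hω; rfl)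
  have hQB : ∀ t : S₁ × S₂ × S₃, Q t ≤ B (t.1, t.2.2) :=
    fun t => probOf_le_probOf hp (fun ω hω => by subst hω; rfl)
  have hQC : ∀ t : S₁ × S₂ × S₃, Q t ≤ C t.2 :=
    fun t => probOf_le_probOf hp (fun ω hω => by subst hω; rfl)
  -- the key pointwise Gibbs inequality
  have key : ∀ t : S₁ × S₂ × S₃, Q t * F t ≤ 2 * (Sq t - Q t) := by
    intro t
    have hSq0 : 0 ≤ Sq t := Real.sqrt_nonneg _
    rcases eq_or_lt_of_le (hQ0 t) with hq | hq
    · simp only [hFdef, ← hq, zero_mul, sub_zero]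
      linarith
    · have hA' : 0 < A (t.1, t.2.1) := lt_of_lt_of_le hq (hQA t)
      have hB' : 0 < B (t.1, t.2.2) := lt_of_lt_of_le hq (hQB t)
      have hC' : 0 < C t.2 := lt_of_lt_of_le hq (hQC t)
      have hABC : 0 < A (t.1, t.2.1) * (B (t.1, t.2.2) * C t.2) := by positivity
      have hSpos : 0 < Sq t := Real.sqrt_pos.mpr hABC
      have hlogS : 2 * Real.log (Sq t)
          = Real.log (A (t.1, t.2.1)) + Real.log (B (t.1, t.2.2)) + Real.log (C t.2) := by
        simp only [hSqdef]
        rw [Real.log_sqrt hABC.le, Real.log_mul hA'.ne' (by positivity),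
          Real.log_mul hB'.ne' hC'.ne']
        ring
      have hgibbs : Real.log (Sq t) - Real.log (Q t) ≤ Sq t / Q t - 1 := by
        have h := Real.log_le_sub_one_of_pos (show (0:ℝ) < Sq t / Q t by positivity)
        rwa [Real.log_div hSpos.ne' hq.ne'] at h
      have h2 : Q t * (Real.log (Sq t) - Real.log (Q t)) ≤ Sq t - Q t := by
        calc Q t * (Real.log (Sq t) - Real.log (Q t)) ≤ Q t * (Sq t / Q t - 1) :=
              mul_le_mul_of_nonneg_left hgibbs hq.le
          _ = Sq t - Q t := by field_simp
      simp only [hFdef]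
      nlinarith [h2, hlogS]
  -- marginal mass computations
  have hAsum : ∑ t ∈ T₁ ×ˢ T₂, A t = 1 := by
    rw [hAdef]
    apply sum_probOf hsum
    intro t ht
    simp only [Finset.mem_image] at ht
    obtain ⟨ω, _, rfl⟩ := ht
    exact Finset.mem_product.mpr ⟨Finset.mem_image_of_mem _ (Finset.mem_univ ω),
      Finset.mem_image_of_mem _ (Finset.mem_univ ω)⟩
  have hBsum : ∑ t ∈ T₁ ×ˢ T₃, B t = 1 := by
    rw [hBdef]
    apply sum_probOf hsum
    intro t ht
    simp only [Finset.mem_image] at ht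
    obtain ⟨ω, _, rfl⟩ := ht
    exact Finset.mem_product.mpr ⟨Finset.mem_image_of_mem _ (Finset.mem_univ ω),
      Finset.mem_image_of_mem _ (Finset.mem_univ ω)⟩
  have hCsum : ∑ t ∈ T₂ ×ˢ T₃, C t = 1 := by
    rw [hCdef]
    apply sum_probOf hsum
    intro t ht
    simp only [Finset.mem_image] at ht
    obtain ⟨ω, _, rfl⟩ := ht
    exact Finset.mem_product.mpr ⟨Finset.mem_image_of_mem _ (Finset.mem_univ ω),
      Finset.mem_image_of_mem _ (Finset.mem_univ ω)⟩
  set B₁ : S₁ → ℝ := fun x => ∑ z ∈ T₃, B (x, z) with hB₁def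
  set C₂ : S₂ → ℝ := fun y => ∑ z ∈ T₃, C (y, z) with hC₂def
  have hB₁0 : ∀ x, 0 ≤ B₁ x := fun x => Finset.sum_nonneg fun z _ => hB0 _
  have hC₂0 : ∀ y, 0 ≤ C₂ y := fun y => Finset.sum_nonneg fun z _ => hC0 _
  have hB₁sum : ∑ x ∈ T₁, B₁ x = 1 := by
    rw [Finset.sum_product] at hBsum; exact hBsum
  have hC₂sum : ∑ y ∈ T₂, C₂ y = 1 := by
    rw [Finset.sum_product] at hCsum; exact hCsum
  -- Loomis–Whitney
  have hLW : ∑ t ∈ T₁ ×ˢ (T₂ ×ˢ T₃), Sq t ≤ 1 := by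
    calc ∑ t ∈ T₁ ×ˢ (T₂ ×ˢ T₃), Sq t
        = ∑ x ∈ T₁, ∑ y ∈ T₂, ∑ z ∈ T₃,
            Real.sqrt (A (x, y) * (B (x, z) * C (y, z))) := by
          simp only [hSqdef, Finset.sum_product]
      _ ≤ ∑ x ∈ T₁, ∑ y ∈ T₂, Real.sqrt (A (x, y)) * (Real.sqrt (B₁ x) * Real.sqrt (C₂ y)) := by
          refine Finset.sum_le_sum fun x _ => Finset.sum_le_sum fun y _ => ?_
          have e : ∑ z ∈ T₃, Real.sqrt (A (x, y) * (B (x, z) * C (y, z)))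
              = Real.sqrt (A (x, y)) * ∑ z ∈ T₃, Real.sqrt (B (x, z) * C (y, z)) := by
            rw [Finset.mul_sum]
            exact Finset.sum_congr rfl fun z _ => Real.sqrt_mul (hA0 _) _
          rw [e]
          exact mul_le_mul_of_nonneg_left
            (sum_sqrt_mul_le T₃ _ _ (fun z _ => hB0 _) (fun z _ => hC0 _)) (Real.sqrt_nonneg _)
      _ = ∑ t ∈ T₁ ×ˢ T₂, Real.sqrt (A t * (B₁ t.1 * C₂ t.2)) := by
          rw [Finset.sum_product]
          refine Finset.sum_congr rfl fun x _ => Finset.sum_congr rfl fun y _ => ?_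
          rw [Real.sqrt_mul (hA0 _), Real.sqrt_mul (hB₁0 _)]
      _ ≤ Real.sqrt (∑ t ∈ T₁ ×ˢ T₂, A t) * Real.sqrt (∑ t ∈ T₁ ×ˢ T₂, B₁ t.1 * C₂ t.2) :=
          sum_sqrt_mul_le _ _ _ (fun t _ => hA0 _) (fun t _ => mul_nonneg (hB₁0 _) (hC₂0 _))
      _ = 1 := by
          rw [hAsum, Real.sqrt_one, one_mul, Finset.sum_product]
          have e : ∀ x ∈ T₁, ∑ y ∈ T₂, B₁ x * C₂ y = B₁ x := by
            intro x _
            rw [← Finset.mul_sum, hC₂sum, mul_one]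
          rw [Finset.sum_congr rfl e, hB₁sum, Real.sqrt_one]
  have main : ∀ T : Finset (S₁ × S₂ × S₃), T ⊆ T₁ ×ˢ (T₂ ×ˢ T₃) →
      (∑ t ∈ T, Q t = 1) → ∑ t ∈ T, Q t * F t ≤ 0 := by
    intro T hT hmass
    have h1 : ∑ t ∈ T, Q t * F t ≤ ∑ t ∈ T, 2 * (Sq t - Q t) :=
      Finset.sum_le_sum fun t _ => key t
    have h2 : ∑ t ∈ T, Sq t ≤ 1 :=
      le_trans (Finset.sum_le_sum_of_subset_of_nonneg hT fun t _ _ => Real.sqrt_nonneg _) hLW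
    have h3 : ∑ t ∈ T, 2 * (Sq t - Q t) = 2 * ((∑ t ∈ T, Sq t) - 1) := by
      rw [← Finset.mul_sum, Finset.sum_sub_distrib, hmass]
    linarith
  -- the main claim
  have claim : ∑ ω, p ω * F (ξ ω) ≤ 0 := by
    rw [← sum_weighted p ξ F, ← hQdef]
    apply main
    · intro t ht
      simp only [Finset.mem_image] at ht
      obtain ⟨ω, _, rfl⟩ := ht
      exact Finset.mem_product.mpr ⟨Finset.mem_image_of_mem _ (Finset.mem_univ ω),
        Finset.mem_product.mpr ⟨Finset.mem_image_of_mem _ (Finset.mem_univ ω),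
          Finset.mem_image_of_mem _ (Finset.mem_univ ω)⟩⟩
    · have h := sum_weighted p ξ (fun _ => 1)
      simp only [mul_one] at h
      rw [hQdef]
      simpa [hsum] using h
  -- unfold entropies and conclude
  have E123 : shannonEntropy p ξ = -∑ ω, p ω * Real.log (Q (ξ ω)) := shannonEntropy_eq p ξ
  have E12 : shannonEntropy p (fun ω => (ξ₁ ω, ξ₂ ω))
      = -∑ ω, p ω * Real.log (A (ξ₁ ω, ξ₂ ω)) := shannonEntropy_eq p _
  have E13 : shannonEntropy p (fun ω => (ξ₁ ω, ξ₃ ω))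
      = -∑ ω, p ω * Real.log (B (ξ₁ ω, ξ₃ ω)) := shannonEntropy_eq p _
  have E23 : shannonEntropy p (fun ω => (ξ₂ ω, ξ₃ ω))
      = -∑ ω, p ω * Real.log (C (ξ₂ ω, ξ₃ ω)) := shannonEntropy_eq p _
  have expand : ∑ ω, p ω * F (ξ ω)
      = (∑ ω, p ω * Real.log (A (ξ₁ ω, ξ₂ ω))) + (∑ ω, p ω * Real.log (B (ξ₁ ω, ξ₃ ω)))
        + (∑ ω, p ω * Real.log (C (ξ₂ ω, ξ₃ ω))) - 2 * ∑ ω, p ω * Real.log (Q (ξ ω)) := by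
    rw [Finset.mul_sum, ← Finset.sum_add_distrib, ← Finset.sum_add_distrib,
      ← Finset.sum_sub_distrib]
    refine Finset.sum_congr rfl fun ω _ => ?_
    simp only [hFdef]
    ring
  rw [E123, E12, E13, E23]
  rw [expand] at claim
  linarith
end

section
/- For any finite set A ⊆ X₁ × X₂ × X₃ with projections A₁₂, A₁₃, A₂₃ onto the pairs of coordinates, |A|² ≤ |A₁₂| · |A₁₃| · |A₂₃|. -/
open scoped Classical

open Finset

lemma nat_sq_sum_le_card_mul_sum_sq {ι : Type*} (s : Finset ι) (f : ι → ℕ) :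
    (∑ i ∈ s, f i) ^ 2 ≤ s.card * ∑ i ∈ s, f i ^ 2 := by
  have h := sq_sum_le_card_mul_sum_sq (s := s) (f := fun i => (f i : ℤ))
  exact_mod_cast h

/-- Discrete Loomis–Whitney inequality in dimension 3. -/
theorem loomis_whitney_discrete {X₁ X₂ X₃ : Type*} (A : Finset (X₁ × X₂ × X₃)) :
    A.card ^ 2 ≤ (A.image fun x => (x.1, x.2.1)).card *
      (A.image fun x => (x.1, x.2.2)).card * (A.image fun x => (x.2.1, x.2.2)).card := by
  set A12 := A.image fun x => (x.1, x.2.1) with hA12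
  set A13 := A.image fun x => (x.1, x.2.2) with hA13
  set A23 := A.image fun x => (x.2.1, x.2.2) with hA23
  set f : X₁ × X₂ → ℕ := fun p => (A.filter fun x => (x.1, x.2.1) = p).card with hf
  set g : X₁ → ℕ := fun a => (A13.filter fun q => q.1 = a).card with hg
  set h : X₂ → ℕ := fun b => (A23.filter fun q => q.1 = b).card with hh
  have hcard : A.card = ∑ p ∈ A12, f p := card_eq_sum_card_image _ A
  have hfg : ∀ p ∈ A12, f p ^ 2 ≤ g p.1 * h p.2 := by
    intro p _
    have h1 : f p ≤ g p.1 := by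
      apply card_le_card_of_injOn (fun x => (x.1, x.2.2))
      · intro x hx
        simp only [mem_coe, mem_filter, mem_image, hA13] at hx ⊢
        refine ⟨⟨x, hx.1, rfl⟩, ?_⟩
        have := hx.2
        simp only [Prod.ext_iff] at this
        exact this.1
      · intro x hx y hy hxy
        simp only [coe_filter, Set.mem_setOf_eq, Prod.ext_iff] at hx hy
        obtain ⟨_, hx1, hx2⟩ := hx
        obtain ⟨_, hy1, hy2⟩ := hy
        simp only [Prod.ext_iff] at hxy
        exact Prod.ext (hx1.trans hy1.symm) (Prod.ext (hx2.trans hy2.symm) hxy.2)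
    have h2 : f p ≤ h p.2 := by
      apply card_le_card_of_injOn (fun x => (x.2.1, x.2.2))
      · intro x hx
        simp only [mem_coe, mem_filter, mem_image, hA23] at hx ⊢
        refine ⟨⟨x, hx.1, rfl⟩, ?_⟩
        have := hx.2
        simp only [Prod.ext_iff] at this
        exact this.2
      · intro x hx y hy hxy
        simp only [coe_filter, Set.mem_setOf_eq, Prod.ext_iff] at hx hy
        obtain ⟨_, hx1, hx2⟩ := hx
        obtain ⟨_, hy1, hy2⟩ := hy
        simp only [Prod.ext_iff] at hxy
        exact Prod.ext (hx1.trans hy1.symm) (Prod.ext hxy.1 hxy.2)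
    calc f p ^ 2 = f p * f p := sq (f p) ▸ (pow_two (f p))
      _ ≤ g p.1 * h p.2 := Nat.mul_le_mul h1 h2
  have key : ∑ p ∈ A12, g p.1 * h p.2 ≤ A13.card * A23.card := by
    set S1 := A.image fun x => x.1 with hS1
    set S2 := A.image fun x => x.2.1 with hS2
    have hsub : A12 ⊆ S1 ×ˢ S2 := by
      intro p hp
      simp only [hA12, mem_image] at hp
      obtain ⟨x, hx, rfl⟩ := hp
      simp only [mem_product, hS1, hS2, mem_image]
      exact ⟨⟨x, hx, rfl⟩, ⟨x, hx, rfl⟩⟩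
    calc ∑ p ∈ A12, g p.1 * h p.2
        ≤ ∑ p ∈ S1 ×ˢ S2, g p.1 * h p.2 :=
          sum_le_sum_of_subset_of_nonneg hsub (fun _ _ _ => Nat.zero_le _)
      _ = (∑ a ∈ S1, g a) * (∑ b ∈ S2, h b) := by
          rw [sum_mul_sum, Finset.sum_product]
      _ = A13.card * A23.card := by
          congr 1
          · exact (card_eq_sum_card_fiberwise (f := fun q : X₁ × X₃ => q.1)
              (fun q hq => by
                simp only [mem_coe, hA13, mem_image] at hq
                obtain ⟨x, hx, rfl⟩ := hq
                simp only [mem_coe, hS1, mem_image]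
                exact ⟨x, hx, rfl⟩)).symm
          · exact (card_eq_sum_card_fiberwise (f := fun q : X₂ × X₃ => q.1)
              (fun q hq => by
                simp only [mem_coe, hA23, mem_image] at hq
                obtain ⟨x, hx, rfl⟩ := hq
                simp only [mem_coe, hS2, mem_image]
                exact ⟨x, hx, rfl⟩)).symm
  calc A.card ^ 2 = (∑ p ∈ A12, f p) ^ 2 := by rw [hcard]
    _ ≤ A12.card * ∑ p ∈ A12, f p ^ 2 := nat_sq_sum_le_card_mul_sum_sq _ _
    _ ≤ A12.card * ∑ p ∈ A12, g p.1 * h p.2 :=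
        Nat.mul_le_mul_left _ (sum_le_sum hfg)
    _ ≤ A12.card * (A13.card * A23.card) := Nat.mul_le_mul_left _ key
    _ = A12.card * A13.card * A23.card := (mul_assoc _ _ _).symm
end

section
/- Let A ⊆ X₁ × X₂ × X₃ be a finite set, A₁₂ and A₁₃ its projections onto coordinates (1,2) and (1,3), and let a, b ≥ 0 be reals with log|A₁₂| + log|A₁₃| ≤ a + b. Then A can be split as A = A' ∪ A'' such that log|A'₁| ≤ a and log|A''| ≤ b, where A'₁ is the projection of A' onto the first coordinate. -/
set_option maxHeartbeats 1000000

open scoped Classical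

lemma sum_fiber_card_le' {α β : Type*} [DecidableEq α] (Q : Finset β) (f : β → α)
    (S : Finset α) : ∑ x ∈ S, (Q.filter fun p => f p = x).card ≤ Q.card := by
  classical
  rw [← Finset.card_biUnion]
  · exact Finset.card_le_card (Finset.biUnion_subset.2 fun x _ => Finset.filter_subset _ _)
  · intro x _ y _ hxy
    simp only [Finset.disjoint_left, Finset.mem_filter]
    rintro p ⟨_, rfl⟩ ⟨_, h⟩
    exact hxy h

/-- Combinatorial splitting counterpart of `H(ξ₁)+H(ξ₁,ξ₂,ξ₃) ≤ H(ξ₁,ξ₂)+H(ξ₁,ξ₃)`. -/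
theorem splitting_combinatorial {X₁ X₂ X₃ : Type*} (A : Finset (X₁ × X₂ × X₃))
    (a b : ℝ) (ha : 0 ≤ a) (hb : 0 ≤ b)
    (h : Real.logb 2 (A.image fun x => (x.1, x.2.1)).card +
        Real.logb 2 (A.image fun x => (x.1, x.2.2)).card ≤ a + b) :
    ∃ A' A'' : Finset (X₁ × X₂ × X₃), A = A' ∪ A'' ∧
      Real.logb 2 (A'.image fun x => x.1).card ≤ a ∧ Real.logb 2 A''.card ≤ b := by
  classical
  set P := A.image fun x => (x.1, x.2.1) with hP
  set Q := A.image fun x => (x.1, x.2.2) with hQ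
  rcases A.eq_empty_or_nonempty with hA | hA
  · exact ⟨∅, ∅, by simp [hA], by simpa using ha, by simpa using hb⟩
  have hPpos : 0 < P.card := Finset.card_pos.2 (hA.image _)
  have hQpos : 0 < Q.card := Finset.card_pos.2 (hA.image _)
  have h2 : (1:ℝ) < 2 := one_lt_two
  have hPQ : (P.card : ℝ) * Q.card ≤ (2:ℝ) ^ (a + b) := by
    have hlog : Real.logb 2 ((P.card : ℝ) * Q.card) ≤ a + b := by
      rw [Real.logb_mul (by positivity) (by positivity)]; exact h
    calc (P.card : ℝ) * Q.card
        = (2:ℝ) ^ Real.logb 2 ((P.card:ℝ) * Q.card) := by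
          rw [Real.rpow_logb two_pos (by norm_num) (by positivity)]
      _ ≤ (2:ℝ) ^ (a+b) := Real.rpow_le_rpow_of_exponent_le h2.le hlog
  set t : ℝ := Q.card / (2:ℝ) ^ a with ht
  have h2a : (0:ℝ) < (2:ℝ) ^ a := Real.rpow_pos_of_pos two_pos a
  have htpos : 0 < t := by positivity
  set m : X₁ → ℕ := fun x₁ => (Q.filter fun p => p.1 = x₁).card with hm
  set n : X₁ → ℕ := fun x₁ => (P.filter fun p => p.1 = x₁).card with hn
  set A' := A.filter (fun x => t ≤ (m x.1 : ℝ)) with hA'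
  set A'' := A.filter (fun x => ¬ t ≤ (m x.1 : ℝ)) with hA''
  refine ⟨A', A'', (Finset.filter_union_filter_not_eq _ A).symm, ?_, ?_⟩
  · -- log |A'₁| ≤ a
    set S := A'.image (fun x => x.1) with hS
    rcases Nat.eq_zero_or_pos S.card with h0 | hSpos
    · simpa [h0] using ha
    have hmt : ∀ x₁ ∈ S, t ≤ (m x₁ : ℝ) := by
      intro x₁ hx₁
      obtain ⟨x, hx, rfl⟩ := Finset.mem_image.1 hx₁
      exact (Finset.mem_filter.1 hx).2
    have hsum : ∑ x₁ ∈ S, m x₁ ≤ Q.card := sum_fiber_card_le' Q Prod.fst S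
    have hcard : (S.card : ℝ) * t ≤ Q.card := by
      calc (S.card : ℝ) * t = ∑ _x₁ ∈ S, t := by
            rw [Finset.sum_const, nsmul_eq_mul]
        _ ≤ ∑ x₁ ∈ S, (m x₁ : ℝ) := Finset.sum_le_sum hmt
        _ = ((∑ x₁ ∈ S, m x₁ : ℕ) : ℝ) := by push_cast; ring
        _ ≤ Q.card := by exact_mod_cast hsum
    have hSa : (S.card : ℝ) ≤ (2:ℝ) ^ a := by
      have h1 : (S.card : ℝ) ≤ (Q.card : ℝ) / t := (le_div_iff₀ htpos).2 hcard
      have h2' : (Q.card : ℝ) / t = (2:ℝ) ^ a := by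
        rw [ht, div_div_eq_mul_div, mul_comm, mul_div_assoc,
          div_self (Nat.cast_pos.2 hQpos).ne', mul_one]
      rwa [h2'] at h1
    rw [Real.logb_le_iff_le_rpow h2 (by exact_mod_cast hSpos)]
    exact hSa
  · -- log |A''| ≤ b
    rcases Nat.eq_zero_or_pos A''.card with h0 | hApos
    · simpa [h0] using hb
    set T := A''.image (fun x => x.1) with hT
    have hfiber : ∀ x₁ ∈ T, ((A''.filter fun x => x.1 = x₁).card : ℕ) ≤ n x₁ * m x₁ := by
      intro x₁ _
      have := Finset.card_le_card_of_injOn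
        (f := fun x : X₁ × X₂ × X₃ => ((x.1, x.2.1), (x.1, x.2.2)))
        (s := A''.filter fun x => x.1 = x₁)
        (t := (P.filter fun p => p.1 = x₁) ×ˢ (Q.filter fun p => p.1 = x₁))
        (by
          intro x hx
          obtain ⟨hx'', hx1⟩ := Finset.mem_filter.1 hx
          have hxA : x ∈ A := Finset.mem_of_mem_filter x hx''
          refine Finset.mem_product.2 ⟨Finset.mem_filter.2 ⟨?_, hx1⟩,
            Finset.mem_filter.2 ⟨?_, hx1⟩⟩
          · exact Finset.mem_image_of_mem _ hxA
          · exact Finset.mem_image_of_mem _ hxA)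
        (by
          intro x _ y _ hxy
          simp only [Prod.mk.injEq] at hxy
          obtain ⟨⟨h1, h2⟩, ⟨_, h3⟩⟩ := hxy
          exact Prod.ext h1 (Prod.ext h2 h3))
      simpa [Finset.card_product, hn, hm] using this
    have hmTt : ∀ x₁ ∈ T, (m x₁ : ℝ) ≤ t := by
      intro x₁ hx₁
      obtain ⟨x, hx, rfl⟩ := Finset.mem_image.1 hx₁
      exact le_of_not_ge (Finset.mem_filter.1 hx).2
    have hsumn : ∑ x₁ ∈ T, n x₁ ≤ P.card := sum_fiber_card_le' P Prod.fst T
    have hcard'' : (A''.card : ℝ) ≤ t * P.card := by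
      have heq : A''.card = ∑ x₁ ∈ T, (A''.filter fun x => x.1 = x₁).card :=
        Finset.card_eq_sum_card_image (fun x => x.1) A''
      calc (A''.card : ℝ) = ∑ x₁ ∈ T, ((A''.filter fun x => x.1 = x₁).card : ℝ) := by
            rw [heq]; push_cast; ring
        _ ≤ ∑ x₁ ∈ T, (n x₁ : ℝ) * (m x₁ : ℝ) := by
            refine Finset.sum_le_sum fun x₁ hx₁ => ?_
            have h' := hfiber x₁ hx₁
            exact_mod_cast h'
        _ ≤ ∑ x₁ ∈ T, (n x₁ : ℝ) * t := by
            refine Finset.sum_le_sum fun x₁ hx₁ => ?_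
            exact mul_le_mul_of_nonneg_left (hmTt x₁ hx₁) (Nat.cast_nonneg _)
        _ = (∑ x₁ ∈ T, (n x₁ : ℝ)) * t := by rw [Finset.sum_mul]
        _ ≤ (P.card : ℝ) * t := by
            refine mul_le_mul_of_nonneg_right ?_ htpos.le
            exact_mod_cast hsumn
        _ = t * P.card := mul_comm _ _
    have hfin : (A''.card : ℝ) ≤ (2:ℝ) ^ b := by
      have h1 : t * (P.card : ℝ) = (P.card : ℝ) * Q.card / (2:ℝ) ^ a := by
        rw [ht]; ring
      have h2' : (P.card : ℝ) * Q.card / (2:ℝ) ^ a ≤ (2:ℝ) ^ (a+b) / (2:ℝ) ^ a :=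
        div_le_div_of_nonneg_right hPQ h2a.le |>.trans_eq rfl
      have h3 : (2:ℝ) ^ (a+b) / (2:ℝ) ^ a = (2:ℝ) ^ b := by
        rw [Real.rpow_add two_pos, mul_comm, mul_div_assoc, div_self h2a.ne', mul_one]
      calc (A''.card : ℝ) ≤ t * P.card := hcard''
        _ = (P.card : ℝ) * Q.card / (2:ℝ) ^ a := h1
        _ ≤ (2:ℝ) ^ (a+b) / (2:ℝ) ^ a := h2'
        _ = (2:ℝ) ^ b := h3
    rw [Real.logb_le_iff_le_rpow h2 (by exact_mod_cast hApos)]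
    exact hfin
end

section
/- For a finite group G with subgroups H₁, H₂, H₃ and uniform random g ∈ G with coset variables g_i = gH_i, the entropy inequality 2·H(g₁,g₂,g₃) ≤ H(g₁,g₂) + H(g₁,g₃) + H(g₂,g₃) is equivalent to the group-theoretic inequality |G|·|H₁∩H₂∩H₃|² ≥ |H₁∩H₂|·|H₁∩H₃|·|H₂∩H₃| ... i.e., prove: for any finite group G and subgroups H₁,H₂,H₃, [G : H₁∩H₂∩H₃]² ≤ [G : H₁∩H₂]·[G : H₁∩H₃]·[G : H₂∩H₃]. -/
/-- Group-theoretic form of the Shearer inequality for three variables: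
`[G : H₁∩H₂∩H₃]² ≤ [G : H₁∩H₂]·[G : H₁∩H₃]·[G : H₂∩H₃]` for a finite group `G`. -/
theorem index_shearer {G : Type*} [Group G] [Finite G] (H₁ H₂ H₃ : Subgroup G) :
    (H₁ ⊓ H₂ ⊓ H₃).index ^ 2 ≤ (H₁ ⊓ H₂).index * (H₁ ⊓ H₃).index * (H₂ ⊓ H₃).index := by
  have hnz : ∀ (H K : Subgroup G), H.relIndex K ≠ 0 := fun H K =>
    Subgroup.index_ne_zero_of_finite (H := H.subgroupOf K)
  -- [G : X] = [H₁⊓H₂ : X] * [G : H₁⊓H₂] where [H₁⊓H₂ : X] = relIndex H₃ (H₁⊓H₂)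
  have e1 : (H₁ ⊓ H₂ ⊓ H₃).index = H₃.relIndex (H₁ ⊓ H₂) * (H₁ ⊓ H₂).index := by
    rw [← Subgroup.inf_relIndex_left (H₁ ⊓ H₂) H₃,
      Subgroup.relIndex_mul_index inf_le_left]
  have e2 : (H₁ ⊓ H₂ ⊓ H₃).index = H₂.relIndex (H₁ ⊓ H₃) * (H₁ ⊓ H₃).index := by
    have : H₁ ⊓ H₂ ⊓ H₃ = (H₁ ⊓ H₃) ⊓ H₂ := by
      rw [inf_assoc, inf_assoc, inf_comm H₂ H₃]
    rw [this, ← Subgroup.inf_relIndex_left (H₁ ⊓ H₃) H₂,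
      Subgroup.relIndex_mul_index inf_le_left]
  have e3 : (H₂ ⊓ H₃).index = H₃.relIndex H₂ * H₂.index := by
    rw [← Subgroup.inf_relIndex_left H₂ H₃, Subgroup.relIndex_mul_index inf_le_left]
  have le1 : H₃.relIndex (H₁ ⊓ H₂) ≤ H₃.relIndex H₂ :=
    Subgroup.relIndex_le_of_le_right inf_le_right (hnz _ _)
  have le2 : H₂.relIndex (H₁ ⊓ H₃) ≤ H₂.index := by
    rw [← Subgroup.relIndex_top_right]
    exact Subgroup.relIndex_le_of_le_right le_top (hnz _ _)
  calc (H₁ ⊓ H₂ ⊓ H₃).index ^ 2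
      = (H₃.relIndex (H₁ ⊓ H₂) * H₂.relIndex (H₁ ⊓ H₃)) *
        ((H₁ ⊓ H₂).index * (H₁ ⊓ H₃).index) := by rw [sq]; nth_rewrite 1 [e1]; rw [e2]; ring
    _ ≤ (H₃.relIndex H₂ * H₂.index) * ((H₁ ⊓ H₂).index * (H₁ ⊓ H₃).index) :=
        Nat.mul_le_mul_right _ (Nat.mul_le_mul le1 le2)
    _ = (H₁ ⊓ H₂).index * (H₁ ⊓ H₃).index * (H₂ ⊓ H₃).index := by rw [e3]; ring
end

section
/- Let N ≥ 2 and X ⊆ {0, 1, …, N−1} be nonempty, and C_X ⊆ [0,1] the set of reals having an N-ary expansion with all digits in X. Then the packing dimension of C_X equals log(|X|)/log(N). -/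
open scoped ENNReal

/-- Extended-real logarithm of an `ℝ≥0∞` value. -/
noncomputable def elog (x : ℝ≥0∞) : EReal :=
  if x = ⊤ then (⊤ : EReal) else ((Real.log x.toReal : ℝ) : EReal)

/-- Minimal number of `ε`-balls needed to cover `s` (`⊤` if no finite cover exists). -/
noncomputable def coveringNumber {α : Type*} [PseudoMetricSpace α] (ε : ℝ) (s : Set α) : ℝ≥0∞ :=
  ⨅ (t : Finset α) (_ : s ⊆ ⋃ x ∈ t, Metric.ball x ε), (t.card : ℝ≥0∞)

/-- Upper box (Minkowski) dimension: `limsup log N(1/n, s) / log n`. -/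
noncomputable def upperBoxDim {α : Type*} [PseudoMetricSpace α] (s : Set α) : EReal :=
  Filter.limsup
    (fun n : ℕ => elog (coveringNumber (1 / n) s) * (((Real.log n)⁻¹ : ℝ) : EReal))
    Filter.atTop

/-- Packing dimension: infimum over countable covers of the supremum of the
upper box dimensions of the pieces. -/
noncomputable def packingDim {α : Type*} [PseudoMetricSpace α] (s : Set α) : EReal :=
  ⨅ (c : ℕ → Set α) (_ : s ⊆ ⋃ n, c n), ⨆ n, upperBoxDim (c n)

/-- The Cantor-type set of reals with an `N`-ary expansion whose digits all lie in `X`. -/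
def cantorDigitSet (N : ℕ) (X : Set ℕ) : Set ℝ :=
  {x | ∃ a : ℕ → ℕ, (∀ i, a i ∈ X) ∧ x = ∑' i, (a i : ℝ) / N ^ (i + 1)}


open Filter Finset Topology

namespace CantorPD

variable {N : ℕ}

/-- The value of a digit sequence. -/
noncomputable def dval (N : ℕ) (a : ℕ → ℕ) : ℝ := ∑' i, (a i : ℝ) / N ^ (i + 1)

lemma Npos (hN : 2 ≤ N) : (0:ℝ) < N := by
  have : (2:ℝ) ≤ N := by exact_mod_cast hN
  linarith

lemma inv_lt_one' (hN : 2 ≤ N) : ((N:ℝ)⁻¹) < 1 := by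
  rw [inv_lt_one_iff₀]; right; exact_mod_cast Nat.lt_of_lt_of_le one_lt_two hN

lemma term_le (hN : 2 ≤ N) {a : ℕ → ℕ} (ha : ∀ i, a i < N) (i : ℕ) :
    (a i : ℝ) / N ^ (i + 1) ≤ ((N:ℝ)⁻¹) ^ i := by
  have hN0 : (0:ℝ) < N := Npos hN
  have h1 : (a i : ℝ) ≤ N := by exact_mod_cast (ha i).le
  have h2 : (a i : ℝ) / N ^ (i+1) ≤ (N:ℝ) / N ^ (i+1) := by gcongr
  have h3 : (N:ℝ) / N ^ (i+1) = ((N:ℝ)⁻¹) ^ i := by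
    rw [pow_succ, inv_pow]
    field_simp
  linarith [h2, h3.le]

lemma summable_geom (hN : 2 ≤ N) : Summable (fun i : ℕ => ((N:ℝ)⁻¹) ^ i) :=
  summable_geometric_of_lt_one (by positivity) (inv_lt_one' hN)

lemma summable_dval (hN : 2 ≤ N) {a : ℕ → ℕ} (ha : ∀ i, a i < N) :
    Summable (fun i => (a i : ℝ) / N ^ (i + 1)) :=
  Summable.of_nonneg_of_le (fun i => by positivity) (term_le hN ha) (summable_geom hN)

lemma dval_split (hN : 2 ≤ N) {a : ℕ → ℕ} (ha : ∀ i, a i < N) (m : ℕ) :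
    dval N a = (∑ i ∈ range m, (a i : ℝ) / N ^ (i + 1))
      + ∑' i, (a (i + m) : ℝ) / N ^ ((i + m) + 1) :=
  (Summable.sum_add_tsum_nat_add m (summable_dval hN ha)).symm

lemma tail_nonneg (a : ℕ → ℕ) (m : ℕ) :
    0 ≤ ∑' i, (a (i + m) : ℝ) / N ^ ((i + m) + 1) :=
  tsum_nonneg (fun i => by positivity)

lemma tail_le (hN : 2 ≤ N) {a : ℕ → ℕ} (ha : ∀ i, a i < N) (m : ℕ) :
    ∑' i, (a (i + m) : ℝ) / N ^ ((i + m) + 1) ≤ ((N:ℝ)⁻¹) ^ m := by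
  have hN0 : (0:ℝ) < N := Npos hN
  have hN1 : (1:ℝ) ≤ (N:ℝ) - 1 := by
    have : (2:ℝ) ≤ N := by exact_mod_cast hN
    linarith
  set C : ℝ := ((N:ℝ) - 1) * ((N:ℝ)⁻¹) ^ (m+1) with hC
  have hterm : ∀ i : ℕ, (a (i + m) : ℝ) / N ^ ((i + m) + 1) ≤ C * ((N:ℝ)⁻¹) ^ i := by
    intro i
    have h1 : (a (i+m) : ℝ) ≤ (N:ℝ) - 1 := by
      have := ha (i+m); have : (a (i+m) : ℝ) + 1 ≤ N := by exact_mod_cast this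
      linarith
    have h2 : (a (i+m) : ℝ) / N ^ ((i+m)+1) = (a (i+m) : ℝ) * ((N:ℝ)⁻¹) ^ ((i+m)+1) := by
      rw [div_eq_mul_inv, inv_pow]
    rw [h2, hC]
    have h3 : ((N:ℝ)⁻¹) ^ ((i+m)+1) = ((N:ℝ)⁻¹) ^ (m+1) * ((N:ℝ)⁻¹) ^ i := by
      rw [← pow_add]; ring_nf
    rw [h3, mul_assoc]
    have h4 : (0:ℝ) ≤ ((N:ℝ)⁻¹) ^ (m+1) * ((N:ℝ)⁻¹) ^ i := by positivity
    calc (a (i+m) : ℝ) * (((N:ℝ)⁻¹) ^ (m+1) * ((N:ℝ)⁻¹) ^ i)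
        ≤ ((N:ℝ) - 1) * (((N:ℝ)⁻¹) ^ (m+1) * ((N:ℝ)⁻¹) ^ i) :=
          mul_le_mul_of_nonneg_right h1 h4
      _ = _ := by ring
  have hsum : ∑' i, (a (i + m) : ℝ) / N ^ ((i + m) + 1) ≤ ∑' i : ℕ, C * ((N:ℝ)⁻¹) ^ i := by
    apply Summable.tsum_le_tsum hterm (Summable.of_nonneg_of_le (fun i => by positivity) hterm
      ((summable_geom hN).mul_left C)) ((summable_geom hN).mul_left C)
  have hval : ∑' i : ℕ, C * ((N:ℝ)⁻¹) ^ i = ((N:ℝ)⁻¹) ^ m := by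
    rw [tsum_mul_left, tsum_geometric_of_lt_one (by positivity) (inv_lt_one' hN), hC]
    have hNe : (N:ℝ) ≠ 0 := hN0.ne'
    have h1 : (1 - (N:ℝ)⁻¹) = ((N:ℝ) - 1) / N := by field_simp
    rw [h1, pow_succ]
    field_simp
  linarith [hsum, hval.le]

lemma geom_Ico (hN : 2 ≤ N) (j : ℕ) : ∀ K, j ≤ K →
    ∑ i ∈ Finset.Ico j K, ((N:ℝ) - 1) / N ^ (i+1) = ((N:ℝ)⁻¹) ^ j - ((N:ℝ)⁻¹) ^ K := by
  have hN0 : (0:ℝ) < N := by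
    have : (2:ℝ) ≤ N := by exact_mod_cast hN
    linarith
  intro K
  induction K with
  | zero => intro h; interval_cases j; simp
  | succ K ih =>
    intro h
    rcases Nat.lt_or_ge j (K+1) with h' | h'
    · have hjK : j ≤ K := Nat.lt_succ_iff.mp h'
      rw [Finset.sum_Ico_succ_top hjK, ih hjK]
      have : ((N:ℝ) - 1) / N ^ (K+1) = ((N:ℝ)⁻¹) ^ K - ((N:ℝ)⁻¹) ^ (K+1) := by
        rw [inv_pow, inv_pow]
        field_simp
        ring
      rw [this]; ring
    · have hj1 : j = K + 1 := le_antisymm h h'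
      subst hj1
      simp

/-- Separation of prefix sums at the first differing digit (one-sided). -/
lemma prefix_sep_aux (hN : 2 ≤ N) {a b : ℕ → ℕ} (ha : ∀ i, a i < N) (hb : ∀ i, b i < N)
    {K j : ℕ} (hj : j < K) (hlt : b j < a j) (hagree : ∀ i < j, a i = b i) :
    ((N:ℝ)⁻¹) ^ K ≤ (∑ i ∈ range K, (a i : ℝ) / N ^ (i+1))
      - ∑ i ∈ range K, (b i : ℝ) / N ^ (i+1) := by
  have hN0 : (0:ℝ) < N := by
    have : (2:ℝ) ≤ N := by exact_mod_cast hN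
    linarith
  have hsub : (∑ i ∈ range K, (a i : ℝ) / N ^ (i+1)) - ∑ i ∈ range K, (b i : ℝ) / N ^ (i+1)
      = ∑ i ∈ range K, ((a i : ℝ) - b i) / N ^ (i+1) := by
    rw [← Finset.sum_sub_distrib]
    congr 1; ext i; ring
  rw [hsub]
  have hr : Finset.range K = Finset.Ico 0 K := by rw [Finset.range_eq_Ico]
  rw [hr, ← Finset.sum_Ico_consecutive _ (Nat.zero_le j) hj.le]
  have h0 : ∑ i ∈ Finset.Ico 0 j, ((a i : ℝ) - b i) / N ^ (i+1) = 0 := by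
    apply Finset.sum_eq_zero
    intro i hi
    rw [Finset.mem_Ico] at hi
    rw [hagree i hi.2]; ring
  rw [h0, zero_add]
  rw [Finset.sum_eq_sum_Ico_succ_bot hj]
  have hterm : ∀ i ∈ Finset.Ico (j+1) K, -(((N:ℝ) - 1) / N ^ (i+1)) ≤ ((a i : ℝ) - b i) / N ^ (i+1) := by
    intro i _
    have h1 : ((b i : ℝ)) ≤ (N:ℝ) - 1 := by
      have := hb i; have : (b i : ℝ) + 1 ≤ N := by exact_mod_cast this
      linarith
    have h2 : (0:ℝ) ≤ (a i : ℝ) := Nat.cast_nonneg _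
    rw [← neg_div]
    apply div_le_div_of_nonneg_right ?_ (by positivity)
    · linarith
  have hlow : -(∑ i ∈ Finset.Ico (j+1) K, ((N:ℝ) - 1) / N ^ (i+1))
      ≤ ∑ i ∈ Finset.Ico (j+1) K, ((a i : ℝ) - b i) / N ^ (i+1) := by
    rw [← Finset.sum_neg_distrib]
    exact Finset.sum_le_sum hterm
  have hgeo := geom_Ico hN (j+1) K hj
  have hfirst : ((N:ℝ)⁻¹) ^ (j+1) ≤ ((a j : ℝ) - b j) / N ^ (j+1) := by
    have h1 : (1:ℝ) ≤ (a j : ℝ) - b j := by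
      have : b j + 1 ≤ a j := hlt
      have : ((b j : ℝ)) + 1 ≤ a j := by exact_mod_cast this
      linarith
    rw [inv_pow]
    calc ((N:ℝ) ^ (j+1))⁻¹ = 1 / N ^ (j+1) := by rw [one_div]
    _ ≤ ((a j : ℝ) - b j) / N ^ (j+1) := by
        apply div_le_div_of_nonneg_right h1 (by positivity)
  rw [hgeo] at hlow
  linarith

lemma prefix_sep (hN : 2 ≤ N) {a b : ℕ → ℕ} (ha : ∀ i, a i < N) (hb : ∀ i, b i < N)
    {K : ℕ} (hne : ∃ j, j < K ∧ a j ≠ b j) :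
    ((N:ℝ)⁻¹) ^ K ≤ |(∑ i ∈ range K, (a i : ℝ) / N ^ (i+1))
      - ∑ i ∈ range K, (b i : ℝ) / N ^ (i+1)| := by
  classical
  set j := Nat.find hne with hjdef
  obtain ⟨hjK, hjne⟩ := Nat.find_spec hne
  have hagree : ∀ i < j, a i = b i := by
    intro i hi
    have := Nat.find_min hne hi
    by_contra hcon
    exact this ⟨lt_trans hi hjK, hcon⟩
  rcases hjne.lt_or_gt with h | h
  · have := prefix_sep_aux hN hb ha hjK h (fun i hi => (hagree i hi).symm)
    rw [abs_sub_comm]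
    exact this.trans (le_abs_self _)
  · have := prefix_sep_aux hN ha hb hjK h hagree
    exact this.trans (le_abs_self _)

lemma dval_sep (hN : 2 ≤ N) {a b : ℕ → ℕ} (ha : ∀ i, a i < N) (hb : ∀ i, b i < N)
    {K : ℕ} (htail : ∀ i, K ≤ i → a i = b i) (hne : ∃ j, j < K ∧ a j ≠ b j) :
    ((N:ℝ)⁻¹) ^ K ≤ |dval N a - dval N b| := by
  have hsplit_a := dval_split hN ha K
  have hsplit_b := dval_split hN hb K
  have htails : ∑' i, (a (i + K) : ℝ) / N ^ ((i + K) + 1)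
      = ∑' i, (b (i + K) : ℝ) / N ^ ((i + K) + 1) := by
    congr 1
    ext i
    rw [htail (i + K) (Nat.le_add_left _ _)]
  have hdiff : dval N a - dval N b = (∑ i ∈ range K, (a i : ℝ) / N ^ (i+1))
      - ∑ i ∈ range K, (b i : ℝ) / N ^ (i+1) := by
    rw [hsplit_a, hsplit_b, htails]; ring
  rw [hdiff]
  exact prefix_sep hN ha hb hne

section Covering
variable {α : Type*} [PseudoMetricSpace α]

lemma coveringNumber_le_card {ε : ℝ} {s : Set α} (t : Finset α)
    (h : s ⊆ ⋃ x ∈ t, Metric.ball x ε) : coveringNumber ε s ≤ t.card :=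
  iInf₂_le t h

lemma one_le_coveringNumber {ε : ℝ} {s : Set α} (hs : s.Nonempty) :
    1 ≤ coveringNumber ε s := by
  rw [coveringNumber]
  refine le_iInf₂ fun t ht => ?_
  obtain ⟨x, hx⟩ := hs
  obtain ⟨c, hc, -⟩ := Set.mem_iUnion₂.mp (ht hx)
  have : 0 < t.card := Finset.card_pos.mpr ⟨c, hc⟩
  exact_mod_cast this

lemma card_le_coveringNumber {ε δ : ℝ} {s : Set α} (T : Finset α)
    (hT : ↑T ⊆ closure s) (hεδ : 4 * ε ≤ δ)
    (hsep : ∀ p ∈ T, ∀ q ∈ T, p ≠ q → δ ≤ dist p q) :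
    (T.card : ℝ≥0∞) ≤ coveringNumber ε s := by
  classical
  rw [coveringNumber]
  refine le_iInf₂ fun t ht => ?_
  have : T.card ≤ t.card := by
    rcases T.eq_empty_or_nonempty with rfl | ⟨p0, hp0⟩
    · simp
    -- ε is positive
    have hsne : s.Nonempty := by
      have : p0 ∈ closure s := hT hp0
      exact closure_nonempty_iff.mp ⟨p0, this⟩
    have hε : 0 < ε := by
      obtain ⟨x, hx⟩ := hsne
      obtain ⟨c, -, hc⟩ := Set.mem_iUnion₂.mp (ht hx)
      exact lt_of_le_of_lt dist_nonneg (Metric.mem_ball.mp hc)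
    have key : ∀ p ∈ T, ∃ c ∈ t, dist p c < 2 * ε := by
      intro p hp
      obtain ⟨q, hq, hdq⟩ := Metric.mem_closure_iff.mp (hT hp) ε hε
      obtain ⟨c, hc, hqc⟩ := Set.mem_iUnion₂.mp (ht hq)
      refine ⟨c, hc, ?_⟩
      have := Metric.mem_ball.mp hqc
      calc dist p c ≤ dist p q + dist q c := dist_triangle _ _ _
      _ < 2 * ε := by linarith
    set f : α → α := fun p => if hp : ∃ c ∈ t, dist p c < 2 * ε then hp.choose else p0 with hf
    apply Finset.card_le_card_of_injOn f
    · intro p hp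
      have hex := key p hp
      rw [hf]
      simp only [dif_pos hex]
      exact hex.choose_spec.1
    · intro p hp q hq hfpq
      by_contra hpq
      have hexp := key p (by exact_mod_cast hp)
      have hexq := key q (by exact_mod_cast hq)
      have h1 : dist p (f p) < 2 * ε := by
        rw [hf]; simp only [dif_pos hexp]; exact hexp.choose_spec.2
      have h2 : dist q (f q) < 2 * ε := by
        rw [hf]; simp only [dif_pos hexq]; exact hexq.choose_spec.2
      have h3 := hsep p (by exact_mod_cast hp) q (by exact_mod_cast hq) hpq
      have : dist p q ≤ dist p (f p) + dist (f q) q := by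
        rw [hfpq]; exact dist_triangle _ _ _
      rw [dist_comm (f q) q] at this
      linarith
  exact_mod_cast this

end Covering


section Elog

lemma le_elog_mul {x : ℝ≥0∞} {v c : ℝ} (hc : 0 ≤ c) (hv : 0 ≤ v)
    (h : x ≠ ⊤ → v ≤ Real.log x.toReal) :
    ((v * c : ℝ) : EReal) ≤ elog x * ((c : ℝ) : EReal) := by
  by_cases hx : x = ⊤
  · rw [elog, if_pos hx]
    rcases eq_or_lt_of_le hc with rfl | hc'
    · simp
    · rw [EReal.top_mul_of_pos (by exact_mod_cast hc')]
      exact le_top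
  · rw [elog, if_neg hx, ← EReal.coe_mul, EReal.coe_le_coe_iff]
    exact mul_le_mul_of_nonneg_right (h hx) hc

lemma elog_mul_le {x : ℝ≥0∞} {v c : ℝ} (hc : 0 ≤ c) (hx : x ≠ ⊤)
    (h : Real.log x.toReal ≤ v) :
    elog x * ((c : ℝ) : EReal) ≤ ((v * c : ℝ) : EReal) := by
  rw [elog, if_neg hx, ← EReal.coe_mul, EReal.coe_le_coe_iff]
  exact mul_le_mul_of_nonneg_right h hc

end Elog


section CantorBounds

variable {X : Finset ℕ}

lemma dval_mem (a : ℕ → ℕ) (ha : ∀ i, a i ∈ X) : dval N a ∈ cantorDigitSet N ↑X :=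
  ⟨a, ha, rfl⟩

lemma mem_dval {x : ℝ} (hx : x ∈ cantorDigitSet N ↑X) :
    ∃ a : ℕ → ℕ, (∀ i, a i ∈ X) ∧ x = dval N a := hx

lemma cov_ub (hN : 2 ≤ N) (hXN : ∀ d ∈ X, d < N) (k : ℕ) {ε : ℝ}
    (hε : ((N:ℝ)⁻¹) ^ k < ε) :
    coveringNumber ε (cantorDigitSet N ↑X) ≤ ((X.card ^ k : ℕ) : ℝ≥0∞) := by
  classical
  set t : Finset ℝ := Finset.image
    (fun b : Fin k → {d // d ∈ X} =>
      ∑ i ∈ range k, ((if h : i < k then ((b ⟨i, h⟩ : ℕ)) else 0 : ℕ) : ℝ) / N ^ (i+1))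
    Finset.univ with ht
  have hcover : cantorDigitSet N ↑X ⊆ ⋃ x ∈ t, Metric.ball x ε := by
    intro x hx
    obtain ⟨a, haX, rfl⟩ := mem_dval hx
    have haN : ∀ i, a i < N := fun i => hXN _ (haX i)
    set P : ℝ := ∑ i ∈ range k, (a i : ℝ) / N ^ (i+1) with hP
    have hPt : P ∈ t := by
      rw [ht]
      apply Finset.mem_image.mpr
      refine ⟨fun i : Fin k => ⟨a i, haX i⟩, Finset.mem_univ _, ?_⟩
      rw [hP]
      apply Finset.sum_congr rfl
      intro i hi
      rw [dif_pos (Finset.mem_range.mp hi)]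
    apply Set.mem_iUnion₂.mpr
    refine ⟨P, hPt, ?_⟩
    rw [Metric.mem_ball, Real.dist_eq]
    have hsplit := dval_split hN haN k
    have h0 := tail_nonneg (N := N) a k
    have h1 := tail_le hN haN k
    have h2 : |dval N a - P| ≤ ((N:ℝ)⁻¹) ^ k := by
      rw [abs_le]
      constructor
      · nlinarith [hsplit]
      · nlinarith [hsplit]
    exact lt_of_le_of_lt h2 hε
  calc coveringNumber ε (cantorDigitSet N ↑X) ≤ t.card := coveringNumber_le_card t hcover
  _ ≤ ((X.card ^ k : ℕ) : ℝ≥0∞) := by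
      have : t.card ≤ X.card ^ k := by
        calc t.card ≤ (Finset.univ : Finset (Fin k → {d // d ∈ X})).card :=
          Finset.card_image_le
        _ = X.card ^ k := by
            rw [Finset.card_univ, Fintype.card_fun, Fintype.card_coe, Fintype.card_fin]
      exact_mod_cast this

lemma cov_lb (hN : 2 ≤ N) (hX : X.Nonempty) (hXN : ∀ d ∈ X, d < N)
    {D : Set ℝ} {m : ℕ} {p : ℕ → ℕ} (hp : ∀ i, p i ∈ X)
    (hmix : ∀ b : ℕ → ℕ, (∀ i, b i ∈ X) →
      dval N (fun i => if i < m then p i else b (i - m)) ∈ closure D)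
    (k : ℕ) {ε : ℝ} (hε : 4 * ε ≤ ((N:ℝ)⁻¹) ^ (m + k)) :
    ((X.card ^ k : ℕ) : ℝ≥0∞) ≤ coveringNumber ε D := by
  classical
  obtain ⟨d0, hd0⟩ := hX
  set bfun : (Fin k → {d // d ∈ X}) → ℕ → ℕ :=
    fun b j => if h : j < k then (b ⟨j, h⟩ : ℕ) else d0 with hbfun
  have hbfunX : ∀ b j, bfun b j ∈ X := by
    intro b j
    by_cases h : j < k
    · simp only [hbfun, dif_pos h]; exact (b ⟨j, h⟩).2
    · simp only [hbfun, dif_neg h]; exact hd0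
  set mix : (Fin k → {d // d ∈ X}) → ℕ → ℕ :=
    fun b i => if i < m then p i else bfun b (i - m) with hmixdef
  have hmixX : ∀ b i, mix b i ∈ X := by
    intro b i
    by_cases h : i < m
    · simp only [hmixdef, if_pos h]; exact hp i
    · simp only [hmixdef, if_neg h]; exact hbfunX b _
  have hmixN : ∀ b i, mix b i < N := fun b i => hXN _ (hmixX b i)
  set z : (Fin k → {d // d ∈ X}) → ℝ := fun b => dval N (mix b) with hz
  have hzsep : ∀ b b', b ≠ b' → ((N:ℝ)⁻¹) ^ (m + k) ≤ |z b - z b'| := by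
    intro b b' hne
    apply dval_sep hN (hmixN b) (hmixN b')
    · intro i hi
      have h : ¬ (i < m) := by omega
      have h' : ¬ (i - m < k) := by omega
      simp only [hmixdef, hbfun, if_neg h, dif_neg h']
    · obtain ⟨j, hj⟩ := Function.ne_iff.mp hne
      refine ⟨m + j, by omega, ?_⟩
      have h1 : ¬ (m + (j:ℕ) < m) := by omega
      have h2 : m + (j:ℕ) - m = (j:ℕ) := by omega
      simp only [hmixdef, hbfun, if_neg h1, h2, dif_pos j.2]
      intro hcon
      apply hj
      apply Subtype.ext
      exact_mod_cast hcon
  have hzinj : Function.Injective z := by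
    intro b b' h
    by_contra hne
    have := hzsep b b' hne
    rw [h, sub_self, abs_zero] at this
    have hpos : (0:ℝ) < ((N:ℝ)⁻¹) ^ (m + k) := by positivity
    linarith
  set T : Finset ℝ := Finset.image z Finset.univ with hT
  have hTcard : T.card = X.card ^ k := by
    rw [hT, Finset.card_image_of_injective _ hzinj, Finset.card_univ, Fintype.card_fun,
      Fintype.card_coe, Fintype.card_fin]
  have hTsub : ↑T ⊆ closure D := by
    intro x hx
    obtain ⟨b, -, rfl⟩ := Finset.mem_image.mp hx
    have := hmix (bfun b) (hbfunX b)
    exact this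
  have hTsep : ∀ x ∈ T, ∀ y ∈ T, x ≠ y → ((N:ℝ)⁻¹) ^ (m + k) ≤ dist x y := by
    intro x hx y hy hxy
    obtain ⟨b, -, rfl⟩ := Finset.mem_image.mp hx
    obtain ⟨b', -, rfl⟩ := Finset.mem_image.mp hy
    rw [Real.dist_eq]
    exact hzsep b b' (fun h => hxy (by rw [h]))
  have := card_le_coveringNumber T hTsub hε hTsep
  rwa [hTcard] at this

end CantorBounds


section BoxDim

variable {X : Finset ℕ}

lemma limsup_aux (L c : ℝ) :
    Filter.limsup (fun n : ℕ => ((L + c * (Real.log n)⁻¹ : ℝ) : EReal)) atTop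
      = ((L : ℝ) : EReal) := by
  apply Filter.Tendsto.limsup_eq
  have h1 : Tendsto (fun n : ℕ => L + c * (Real.log n)⁻¹) atTop (𝓝 L) := by
    have h2 : Tendsto (fun n : ℕ => (Real.log n)⁻¹) atTop (𝓝 0) :=
      tendsto_inv_atTop_zero.comp (Real.tendsto_log_atTop.comp tendsto_natCast_atTop_atTop)
    have := (h2.const_mul c).const_add L
    simpa using this
  exact (continuous_coe_real_ereal.tendsto L).comp h1

lemma log_card_nonneg (hX : X.Nonempty) : 0 ≤ Real.log X.card := by
  apply Real.log_nonneg
  have : 1 ≤ X.card := Finset.card_pos.mpr hX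
  exact_mod_cast this

lemma upperBoxDim_cantor_le (hN : 2 ≤ N) (hX : X.Nonempty) (hXN : ∀ d ∈ X, d < N) :
    upperBoxDim (cantorDigitSet N ↑X)
      ≤ ((Real.log X.card / Real.log N : ℝ) : EReal) := by
  have hN1 : 1 < N := lt_of_lt_of_le one_lt_two hN
  have hNR : (1:ℝ) < N := by exact_mod_cast hN1
  have hlogN : 0 < Real.log N := Real.log_pos hNR
  have hlogs : 0 ≤ Real.log X.card := log_card_nonneg hX
  set L : ℝ := Real.log X.card / Real.log N with hL
  obtain ⟨d0, hd0⟩ := hX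
  have hEne : (cantorDigitSet N ↑X).Nonempty :=
    ⟨dval N (fun _ => d0), dval_mem _ (fun _ => hd0)⟩
  rw [upperBoxDim, ← limsup_aux L (2 * Real.log X.card)]
  apply Filter.limsup_le_limsup _ Filter.isCobounded_le_of_bot Filter.isBounded_le_of_top
  rw [Filter.EventuallyLE, eventually_atTop]
  refine ⟨2, fun n hn => ?_⟩
  have hn1 : 1 < (n:ℝ) := by exact_mod_cast hn
  have hn0 : (0:ℝ) < n := by linarith
  have hlogn : 0 < Real.log n := Real.log_pos hn1
  set k' : ℕ := Nat.log N n + 1 with hk'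
  have hnk : (n:ℕ) < N ^ k' := Nat.lt_pow_succ_log_self hN1 n
  have hcov : coveringNumber (1 / n) (cantorDigitSet N ↑X) ≤ ((X.card ^ k' : ℕ) : ℝ≥0∞) := by
    apply cov_ub hN hXN k'
    have h1 : (n:ℝ) < (N:ℝ) ^ k' := by exact_mod_cast hnk
    rw [inv_pow]
    rw [inv_lt_comm₀ (by positivity) (by positivity)]
    calc ((1:ℝ)/n)⁻¹ = n := by simp
    _ < (N:ℝ) ^ k' := h1
  have hfin : coveringNumber (1 / n) (cantorDigitSet N ↑X) ≠ ⊤ :=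
    ne_top_of_le_ne_top (ENNReal.natCast_ne_top _) hcov
  have h1le : 1 ≤ coveringNumber (1 / n) (cantorDigitSet N ↑X) :=
    one_le_coveringNumber hEne
  -- bound log of covering number
  have htR : (coveringNumber (1 / n) (cantorDigitSet N ↑X)).toReal ≤ ((X.card : ℝ)) ^ k' := by
    have := ENNReal.toReal_mono (ENNReal.natCast_ne_top _) hcov
    simpa using this
  have htpos : 0 < (coveringNumber (1 / n) (cantorDigitSet N ↑X)).toReal := by
    apply ENNReal.toReal_pos _ hfin
    intro h0
    rw [h0] at h1le
    exact (by simp : ¬ ((1:ℝ≥0∞) ≤ 0)) h1le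
  have hlogcov : Real.log (coveringNumber (1 / n) (cantorDigitSet N ↑X)).toReal
      ≤ (Real.log n / Real.log N + 2) * Real.log X.card := by
    calc Real.log (coveringNumber (1 / n) (cantorDigitSet N ↑X)).toReal
        ≤ Real.log ((X.card : ℝ) ^ k') := Real.log_le_log htpos htR
    _ = (k' : ℝ) * Real.log X.card := by rw [Real.log_pow]
    _ ≤ (Real.log n / Real.log N + 2) * Real.log X.card := by
        apply mul_le_mul_of_nonneg_right _ hlogs
        have hNlog : (Nat.log N n : ℝ) * Real.log N ≤ Real.log n := by
          have h2 : (N:ℝ) ^ (Nat.log N n) ≤ n := by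
            exact_mod_cast Nat.pow_log_le_self N (by omega : n ≠ 0)
          have := Real.log_le_log (by positivity) h2
          rwa [Real.log_pow] at this
        have : (Nat.log N n : ℝ) ≤ Real.log n / Real.log N := by
          rw [le_div_iff₀ hlogN]; exact hNlog
        have hk'c : (k' : ℝ) = (Nat.log N n : ℝ) + 1 := by
          rw [hk']; push_cast; ring
        rw [hk'c]; linarith
  have := elog_mul_le (inv_nonneg.mpr hlogn.le) hfin hlogcov
  refine le_trans this ?_
  apply EReal.coe_le_coe_iff.mpr
  have heq : (Real.log n / Real.log N + 2) * Real.log X.card * (Real.log n)⁻¹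
      = L + 2 * Real.log X.card * (Real.log n)⁻¹ := by
    rw [hL]
    field_simp
  rw [heq]

lemma le_upperBoxDim_of_prefix (hN : 2 ≤ N) (hX : X.Nonempty) (hXN : ∀ d ∈ X, d < N)
    {D : Set ℝ} {m : ℕ} {p : ℕ → ℕ} (hp : ∀ i, p i ∈ X)
    (hmix : ∀ b : ℕ → ℕ, (∀ i, b i ∈ X) →
      dval N (fun i => if i < m then p i else b (i - m)) ∈ closure D) :
    ((Real.log X.card / Real.log N : ℝ) : EReal) ≤ upperBoxDim D := by
  have hN1 : 1 < N := lt_of_lt_of_le one_lt_two hN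
  have hNR : (1:ℝ) < N := by exact_mod_cast hN1
  have hlogN : 0 < Real.log N := Real.log_pos hNR
  have hlogs : 0 ≤ Real.log X.card := log_card_nonneg hX
  have hcard1 : (1:ℝ) ≤ X.card := by
    have : 1 ≤ X.card := Finset.card_pos.mpr hX
    exact_mod_cast this
  set L : ℝ := Real.log X.card / Real.log N with hL
  rw [upperBoxDim, ← limsup_aux L (-((m+3) * Real.log X.card))]
  apply Filter.limsup_le_limsup _ Filter.isCobounded_le_of_bot Filter.isBounded_le_of_top
  rw [Filter.EventuallyLE, eventually_atTop]
  refine ⟨N ^ (m+3), fun n hn => ?_⟩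
  have hn2 : 2 ≤ n := by
    have h1 : 2 ≤ N ^ (m+3) := le_trans hN (Nat.le_self_pow (by omega) N)
    omega
  have hn0 : n ≠ 0 := by omega
  have hn1R : (1:ℝ) < n := by exact_mod_cast hn2
  have hn0R : (0:ℝ) < n := by linarith
  have hlogn : 0 < Real.log n := Real.log_pos hn1R
  set j : ℕ := Nat.log N n with hjdef
  have hj : m + 3 ≤ j := (Nat.le_log_iff_pow_le hN1 hn0).mpr hn
  set k : ℕ := j - (m+2) with hkdef
  have hjmk : m + k + 2 = j := by omega
  have hcov : ((X.card ^ k : ℕ) : ℝ≥0∞) ≤ coveringNumber (1 / n) D := by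
    apply cov_lb hN hX hXN hp hmix k
    have hnat : 4 * N ^ (m+k) ≤ n := by
      have h1 : N ^ j ≤ n := Nat.pow_log_le_self N hn0
      have h2 : 4 ≤ N ^ 2 := by nlinarith [hN]
      calc 4 * N ^ (m+k) ≤ N ^ 2 * N ^ (m+k) := by
            exact Nat.mul_le_mul_right _ h2
      _ = N ^ (m+k+2) := by rw [pow_add]; ring
      _ = N ^ j := by rw [hjmk]
      _ ≤ n := h1
    have hreal : (4:ℝ) * (N:ℝ) ^ (m+k) ≤ n := by exact_mod_cast hnat
    rw [inv_pow, mul_one_div, ← one_div ((N:ℝ) ^ (m+k)),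
      div_le_div_iff₀ hn0R (by positivity)]
    linarith
  have step1 : ((((k:ℝ) * Real.log X.card) * (Real.log n)⁻¹ : ℝ) : EReal)
      ≤ elog (coveringNumber (1 / n) D) * (((Real.log n)⁻¹ : ℝ) : EReal) := by
    apply le_elog_mul (inv_nonneg.mpr hlogn.le) (by positivity)
    intro hfin
    have h1 : ((X.card:ℝ)) ^ k ≤ (coveringNumber (1 / n) D).toReal := by
      have := ENNReal.toReal_mono hfin hcov
      simpa using this
    calc (k:ℝ) * Real.log X.card = Real.log ((X.card:ℝ) ^ k) := (Real.log_pow _ _).symm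
    _ ≤ Real.log (coveringNumber (1 / n) D).toReal := Real.log_le_log (by positivity) h1
  refine le_trans ?_ step1
  apply EReal.coe_le_coe_iff.mpr
  have hkR : (k:ℝ) = (j:ℝ) - ((m:ℝ)+2) := by
    rw [hkdef]
    have h1 : m + 2 ≤ j := by omega
    push_cast [Nat.cast_sub h1]
    ring
  have hjgt : Real.log n / Real.log N < (j:ℝ) + 1 := by
    have h1 : (n:ℝ) < (N:ℝ) ^ (j+1) := by
      exact_mod_cast Nat.lt_pow_succ_log_self hN1 n
    have h2 : Real.log n < ((j:ℝ) + 1) * Real.log N := by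
      have := Real.log_lt_log hn0R h1
      rwa [Real.log_pow, Nat.cast_add, Nat.cast_one] at this
    rw [div_lt_iff₀ hlogN]
    exact h2
  have hklow : Real.log n / Real.log N - ((m:ℝ)+3) ≤ (k:ℝ) := by
    rw [hkR]; linarith
  have hmul : (Real.log n / Real.log N - ((m:ℝ)+3)) * Real.log X.card * (Real.log n)⁻¹
      ≤ (k:ℝ) * Real.log X.card * (Real.log n)⁻¹ := by
    apply mul_le_mul_of_nonneg_right _ (inv_nonneg.mpr hlogn.le)
    exact mul_le_mul_of_nonneg_right hklow hlogs
  have hid : (Real.log n / Real.log N - ((m:ℝ)+3)) * Real.log X.card * (Real.log n)⁻¹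
      = L + -(((m:ℝ)+3) * Real.log X.card) * (Real.log n)⁻¹ := by
    rw [hL]
    field_simp
    ring
  rw [← hid]
  exact hmul

end BoxDim


section Baire

variable {X : Finset ℕ}

lemma isCompact_cantor (hN : 2 ≤ N) (hXN : ∀ d ∈ X, d < N) :
    IsCompact (cantorDigitSet N ↑X) := by
  have hΦ : Continuous (fun b : (ℕ → {d // d ∈ X}) => ∑' i, ((b i : ℕ) : ℝ) / N ^ (i+1)) := by
    apply continuous_tsum (u := fun i : ℕ => ((N:ℝ)⁻¹) ^ i)
    · intro i
      exact (continuous_of_discreteTopology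
        (α := {d // d ∈ X}) (f := fun d => ((d : ℕ) : ℝ) / N ^ (i+1))).comp (continuous_apply i)
    · exact summable_geom hN
    · intro i b
      have h1 : (0:ℝ) ≤ ((b i : ℕ) : ℝ) / N ^ (i+1) := by positivity
      rw [Real.norm_eq_abs, abs_of_nonneg h1]
      exact term_le hN (fun j => hXN _ (b j).2) i
  have hrange : cantorDigitSet N ↑X
      = Set.range (fun b : (ℕ → {d // d ∈ X}) => ∑' i, ((b i : ℕ) : ℝ) / N ^ (i+1)) := by
    ext x
    constructor
    · rintro ⟨a, haX, rfl⟩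
      exact ⟨fun i => ⟨a i, haX i⟩, rfl⟩
    · rintro ⟨b, rfl⟩
      exact ⟨fun i => b i, fun i => (b i).2, rfl⟩
  rw [hrange]
  exact isCompact_range hΦ

lemma exists_prefix (hN : 2 ≤ N) (hX : X.Nonempty) (hXN : ∀ d ∈ X, d < N)
    {c : ℕ → Set ℝ} (hc : cantorDigitSet N ↑X ⊆ ⋃ n, c n) :
    ∃ (n m : ℕ) (p : ℕ → ℕ), (∀ i, p i ∈ X) ∧ ∀ b : ℕ → ℕ, (∀ i, b i ∈ X) →
      dval N (fun i => if i < m then p i else b (i - m)) ∈ closure (c n) := by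
  have hcpt := isCompact_cantor hN hXN
  have hcl : IsClosed (cantorDigitSet N ↑X) := hcpt.isClosed
  haveI : CompleteSpace (cantorDigitSet N ↑X) := hcl.completeSpace_coe
  obtain ⟨d0, hd0⟩ := hX
  haveI : Nonempty (cantorDigitSet N ↑X) :=
    ⟨⟨dval N (fun _ => d0), dval_mem _ (fun _ => hd0)⟩⟩
  set F : ℕ → Set (cantorDigitSet N ↑X) := fun n => Subtype.val ⁻¹' closure (c n) with hF
  have hFcl : ∀ n, IsClosed (F n) := fun n =>
    IsClosed.preimage continuous_subtype_val isClosed_closure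
  have hFun : ⋃ n, F n = Set.univ := by
    ext x
    simp only [Set.mem_iUnion, Set.mem_univ, iff_true]
    obtain ⟨n, hn⟩ := Set.mem_iUnion.mp (hc x.2)
    exact ⟨n, subset_closure hn⟩
  obtain ⟨n, hint⟩ := nonempty_interior_of_iUnion_of_closed hFcl hFun
  obtain ⟨y, hy⟩ := hint
  obtain ⟨r, hr, hball⟩ := Metric.isOpen_iff.mp isOpen_interior y hy
  have hball' : ∀ w : cantorDigitSet N ↑X, dist w y < r → (w : ℝ) ∈ closure (c n) := by
    intro w hw
    have h1 : w ∈ interior (F n) := hball (Metric.mem_ball.mpr hw)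
    have h2 : w ∈ F n := interior_subset h1
    exact h2
  obtain ⟨a, haX, hay⟩ := mem_dval y.2
  have haN : ∀ i, a i < N := fun i => hXN _ (haX i)
  obtain ⟨m, hm⟩ := exists_pow_lt_of_lt_one hr (inv_lt_one' hN)
  refine ⟨n, m, a, haX, ?_⟩
  intro b hb
  set g : ℕ → ℕ := fun i => if i < m then a i else b (i - m) with hg
  have hgX : ∀ i, g i ∈ X := by
    intro i
    by_cases h : i < m
    · simp only [hg, if_pos h]; exact haX i
    · simp only [hg, if_neg h]; exact hb _
  have hgN : ∀ i, g i < N := fun i => hXN _ (hgX i)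
  have hwE : dval N g ∈ cantorDigitSet N ↑X := dval_mem _ hgX
  have hdist : |dval N g - (y : ℝ)| ≤ ((N:ℝ)⁻¹) ^ m := by
    have hsg := dval_split hN hgN m
    have hsa := dval_split hN haN m
    have hpre : ∑ i ∈ range m, (g i : ℝ) / N ^ (i+1)
        = ∑ i ∈ range m, (a i : ℝ) / N ^ (i+1) := by
      apply Finset.sum_congr rfl
      intro i hi
      have h := Finset.mem_range.mp hi
      simp only [hg, if_pos h]
    have h0g := tail_nonneg (N := N) g m
    have h1g := tail_le hN hgN m
    have h0a := tail_nonneg (N := N) a m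
    have h1a := tail_le hN haN m
    rw [hay, hsg, hsa, hpre]
    rw [abs_le]
    constructor
    · linarith
    · linarith
  have hwb : dist (⟨dval N g, hwE⟩ : cantorDigitSet N ↑X) y < r := by
    rw [Subtype.dist_eq, Real.dist_eq]
    exact lt_of_le_of_lt hdist hm
  exact hball' _ hwb

end Baire

end CantorPD

/-- The packing dimension of `C_X` equals `log|X| / log N`. -/
theorem packingDim_cantorDigitSet (N : ℕ) (hN : 2 ≤ N) (X : Finset ℕ) (hX : X.Nonempty)
    (hXN : ∀ d ∈ X, d < N) :
    packingDim (cantorDigitSet N ↑X) = ((Real.log X.card / Real.log N : ℝ) : EReal) := by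
  apply le_antisymm
  · rw [packingDim]
    refine le_trans (iInf₂_le (fun _ => cantorDigitSet N ↑X) ?_) ?_
    · intro x hx
      exact Set.mem_iUnion.mpr ⟨0, hx⟩
    · exact iSup_le fun n => CantorPD.upperBoxDim_cantor_le hN hX hXN
  · rw [packingDim]
    refine le_iInf fun c => le_iInf fun hc => ?_
    obtain ⟨n, m, p, hp, hmix⟩ := CantorPD.exists_prefix hN hX hXN hc
    exact le_trans (CantorPD.le_upperBoxDim_of_prefix hN hX hXN hp hmix) (le_iSup (fun n => upperBoxDim (c n)) n)
end

section
/- Let N ≥ 2, m ≥ 1, A ⊆ {0,…,N−1}^m, and let I ⊆ {1,…,m} be nonempty. Then the projection of the Cantor-type set C_A ⊆ [0,1]^m onto the coordinates in I equals C_{A_I}, where A_I ⊆ {0,…,N−1}^I is the projection of A onto the coordinates in I. -/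
/-- The multidimensional Cantor-type set built from the digit set `A`. -/
def cantorDigitSetPi (N : ℕ) {ι : Type*} (A : Set (ι → ℕ)) : Set (ι → ℝ) :=
  {x | ∃ a : ℕ → ι → ℕ, (∀ i, a i ∈ A) ∧ ∀ j, x j = ∑' i, (a i j : ℝ) / N ^ (i + 1)}

/-- The projection of `C_A` onto the coordinates in `I` is `C_{A_I}`. -/
theorem cantorDigitSetPi_proj (N : ℕ) (hN : 2 ≤ N) {m : ℕ} (A : Set (Fin m → ℕ))
    (hAN : ∀ v ∈ A, ∀ j, v j < N) (I : Set (Fin m)) (hI : I.Nonempty) :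
    (fun x : Fin m → ℝ => fun i : I => x i.1) '' cantorDigitSetPi N A =
      cantorDigitSetPi N ((fun v : Fin m → ℕ => fun i : I => v i.1) '' A) := by
  ext y
  constructor
  · rintro ⟨x, ⟨a, ha, hx⟩, rfl⟩
    exact ⟨fun i => fun j : I => a i j.1, fun i => ⟨a i, ha i, rfl⟩, fun j => hx j.1⟩
  · rintro ⟨a, ha, hy⟩
    choose b hbA hb using ha
    refine ⟨fun j => ∑' i, (b i j : ℝ) / N ^ (i + 1), ⟨b, hbA, fun j => rfl⟩, ?_⟩
    funext j
    have : ∀ n, b n j.1 = a n j := fun n => congrFun (hb n) j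
    simp only [this]
    exact (hy j).symm
end

section
/- Let N ≥ 2, A ⊆ {0,…,N−1}^m, and I ⊆ {1,…,m} nonempty, and suppose the projection π_I : A → A_I is uniform (every element of A_I has the same number r = |A|/|A_I| of preimages). Let d = log(|A|/|A_I|)/log N. Then for every subset X ⊆ C_A, dim_H(X) ≤ dim_H(X_I) + d, where X_I is the projection of X onto the coordinates in I. -/
open scoped Classical

open scoped ENNReal NNReal MeasureTheory
set_option maxHeartbeats 1000000


section digits
variable {N : ℕ}

lemma Npos (hN : 2 ≤ N) : (0:ℝ) < N := by positivity

lemma Npowpos (hN : 2 ≤ N) (k : ℕ) : (0:ℝ) < (N:ℝ) ^ k := pow_pos (Npos hN) k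

lemma geom_decomp (hN : 2 ≤ N) (n : ℕ) : ∀ i : ℕ,
    ((N : ℝ) - 1) / N ^ (i + n + 1) = (((N:ℝ) - 1) / N ^ (n+1)) * ((N:ℝ)⁻¹) ^ i := by
  intro i
  rw [inv_pow, div_mul_eq_mul_div, div_eq_div_iff (Npowpos hN _).ne' (Npowpos hN _).ne',
    show i + n + 1 = i + (n+1) by ring, pow_add (N:ℝ) i (n+1), mul_assoc,
    inv_mul_cancel_left₀ (Npowpos hN i).ne']

lemma geom_tail (hN : 2 ≤ N) (n : ℕ) :
    ∑' i : ℕ, ((N : ℝ) - 1) / N ^ (i + n + 1) = ((N : ℝ) ^ n)⁻¹ := by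
  have hN1 : (1:ℝ) < N := by exact_mod_cast hN.trans_lt' one_lt_two
  have hN0 : (0:ℝ) < N := Npos hN
  have h2 : ∑' i : ℕ, ((N:ℝ)⁻¹) ^ i = (1 - (N:ℝ)⁻¹)⁻¹ :=
    tsum_geometric_of_lt_one (by positivity) (inv_lt_one_of_one_lt₀ hN1)
  have h3 : (1 - (N:ℝ)⁻¹) = ((N:ℝ) - 1)/N := by field_simp
  have hN1' : (N:ℝ) - 1 ≠ 0 := by linarith
  calc ∑' i : ℕ, ((N : ℝ) - 1) / N ^ (i + n + 1)
      = ∑' i : ℕ, (((N:ℝ) - 1) / N ^ (n+1)) * ((N:ℝ)⁻¹) ^ i := by simp only [geom_decomp hN n]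
    _ = (((N:ℝ) - 1) / N ^ (n+1)) * (1 - (N:ℝ)⁻¹)⁻¹ := by rw [tsum_mul_left, h2]
    _ = ((N : ℝ) ^ n)⁻¹ := by rw [h3, pow_succ]; field_simp

lemma digit_le (hN : 2 ≤ N) {a : ℕ} (ha : a < N) : (a : ℝ) ≤ (N : ℝ) - 1 := by
  have : (a : ℝ) + 1 ≤ N := by exact_mod_cast ha
  linarith

lemma summable_geomN (hN : 2 ≤ N) (n : ℕ) :
    Summable (fun i : ℕ => ((N : ℝ) - 1) / N ^ (i + n + 1)) := by
  have hN1 : (1:ℝ) < N := by exact_mod_cast hN.trans_lt' one_lt_two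
  simp only [geom_decomp hN n]
  exact (summable_geometric_of_lt_one (by positivity) (inv_lt_one_of_one_lt₀ hN1)).mul_left _

lemma summable_digits (hN : 2 ≤ N) (a : ℕ → ℕ) (ha : ∀ i, a i < N) :
    Summable (fun i : ℕ => (a i : ℝ) / N ^ (i + 1)) := by
  have hg : Summable (fun i : ℕ => ((N : ℝ) - 1) / N ^ (i + 1)) := by
    simpa using summable_geomN hN 0
  have h1 : ∀ i : ℕ, (0:ℝ) ≤ (a i : ℝ) / N ^ (i + 1) := fun i => by positivity
  have h2 : ∀ i : ℕ, (a i : ℝ) / N ^ (i + 1) ≤ ((N : ℝ) - 1) / N ^ (i + 1) :=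
    fun i => div_le_div_of_nonneg_right (digit_le hN (ha i)) (Npowpos hN _).le
  exact Summable.of_nonneg_of_le h1 h2 hg

lemma digit_tsum_bounds (hN : 2 ≤ N) (a : ℕ → ℕ) (ha : ∀ i, a i < N) (n : ℕ) :
    ∑ i ∈ Finset.range n, (a i : ℝ) / N ^ (i + 1) ≤ ∑' i : ℕ, (a i : ℝ) / N ^ (i + 1) ∧
    ∑' i : ℕ, (a i : ℝ) / N ^ (i + 1) ≤
      ∑ i ∈ Finset.range n, (a i : ℝ) / N ^ (i + 1) + ((N : ℝ) ^ n)⁻¹ := by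
  have hs := summable_digits hN a ha
  have key := Summable.sum_add_tsum_nat_add (f := fun i : ℕ => (a i : ℝ) / N ^ (i + 1)) n hs
  have htail0 : (0:ℝ) ≤ ∑' i : ℕ, (a (i + n) : ℝ) / N ^ (i + n + 1) :=
    tsum_nonneg (fun i => by positivity)
  have hsum1 : Summable (fun i : ℕ => (a (i + n) : ℝ) / N ^ (i + n + 1)) :=
    (summable_nat_add_iff n).2 hs
  have hle : ∀ i : ℕ, (a (i + n) : ℝ) / N ^ (i + n + 1) ≤ ((N:ℝ) - 1) / N ^ (i + n + 1) :=
    fun i => div_le_div_of_nonneg_right (digit_le hN (ha _)) (Npowpos hN _).le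
  have htail : ∑' i : ℕ, (a (i + n) : ℝ) / N ^ (i + n + 1) ≤ ((N : ℝ) ^ n)⁻¹ := by
    rw [← geom_tail hN n]
    exact Summable.tsum_le_tsum hle hsum1 (summable_geomN hN n)
  constructor
  · rw [← key]; linarith
  · rw [← key]; linarith

end digits


section cyl
variable (N : ℕ) {m : ℕ} (A : Finset (Fin m → ℕ))

/-- cylinder set of depth `n` with prefix `p` -/
def cylSet (n : ℕ) (p : Fin n → (Fin m → ℕ)) : Set (Fin m → ℝ) :=
  {x | ∃ a : ℕ → Fin m → ℕ, (∀ i, a i ∈ A) ∧ (∀ i : Fin n, a i.1 = p i) ∧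
        ∀ j, x j = ∑' i : ℕ, (a i j : ℝ) / N ^ (i + 1)}

/-- partial sum value of a prefix at coordinate j -/
noncomputable def pref (n : ℕ) (p : Fin n → (Fin m → ℕ)) (j : Fin m) : ℝ :=
  ∑ i : Fin n, (p i j : ℝ) / N ^ ((i : ℕ) + 1)

variable {N A}

lemma cyl_cover (n : ℕ) :
    cantorDigitSetPi N (↑A : Set (Fin m → ℕ)) ⊆
      ⋃ p : Fin n → ↥A, cylSet N A n (fun i => (p i).1) := by
  rintro x ⟨a, ha, hx⟩
  refine Set.mem_iUnion.2 ⟨fun i => ⟨a i.1, ha i.1⟩, a, ha, fun i => rfl, hx⟩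

lemma cyl_bounds (hN : 2 ≤ N) (hAN : ∀ v ∈ A, ∀ j, v j < N) {n : ℕ}
    {p : Fin n → (Fin m → ℕ)} {x : Fin m → ℝ} (hx : x ∈ cylSet N A n p) (j : Fin m) :
    pref N n p j ≤ x j ∧ x j ≤ pref N n p j + ((N : ℝ) ^ n)⁻¹ := by
  obtain ⟨a, ha, hpre, hval⟩ := hx
  have hd : ∀ i, a i j < N := fun i => hAN _ (ha i) j
  have hb := digit_tsum_bounds hN (fun i => a i j) hd n
  have hps : ∑ i ∈ Finset.range n, (a i j : ℝ) / N ^ (i + 1) = pref N n p j := by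
    rw [pref, Finset.sum_range fun i => ((a i j : ℝ) / N ^ (i + 1))]
    exact Finset.sum_congr rfl fun i _ => by rw [← hpre i]
  rw [hval j]
  rw [hps] at hb
  exact hb

lemma cyl_edist (hN : 2 ≤ N) (hAN : ∀ v ∈ A, ∀ j, v j < N) {n : ℕ}
    {p : Fin n → (Fin m → ℕ)} {x y : Fin m → ℝ}
    (hx : x ∈ cylSet N A n p) (hy : y ∈ cylSet N A n p) :
    edist x y ≤ ENNReal.ofReal (((N : ℝ) ^ n)⁻¹) := by
  rw [edist_dist]
  refine ENNReal.ofReal_le_ofReal ?_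
  rw [dist_pi_le_iff (by positivity)]
  intro j
  have h1 := cyl_bounds hN hAN hx j
  have h2 := cyl_bounds hN hAN hy j
  rw [Real.dist_eq, abs_le]
  constructor <;> [linarith [h1.1, h2.2]; linarith [h1.2, h2.1]]

lemma cyl_diam (hN : 2 ≤ N) (hAN : ∀ v ∈ A, ∀ j, v j < N) {n : ℕ}
    (p : Fin n → (Fin m → ℕ)) :
    EMetric.diam (cylSet N A n p) ≤ ENNReal.ofReal (((N : ℝ) ^ n)⁻¹) :=
  EMetric.diam_le fun _ hx _ hy => cyl_edist hN hAN hx hy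

end cyl


section count
variable {N m : ℕ} {I : Finset (Fin m)}

/-- integer value of an I-restricted digit string -/
def mval (N : ℕ) (n : ℕ) (w : Fin n → (↥I → ℕ)) (j : ↥I) : ℕ :=
  ∑ i : Fin n, w i j * N ^ (n - 1 - (i : ℕ))

lemma mval_eq_rev (N n : ℕ) (w : Fin n → (↥I → ℕ)) (j : ↥I) :
    mval N n w j = ∑ i : Fin n, w (Fin.rev i) j * N ^ (i : ℕ) := by
  rw [mval]
  refine Fintype.sum_equiv Fin.revPerm _ _ fun i => ?_
  simp only [Fin.revPerm_apply]
  congr 2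
  · rw [Fin.rev_rev]
  · rw [Fin.val_rev]
    omega

lemma mval_inj (N n : ℕ) (w w' : Fin n → (↥I → ℕ))
    (hw : ∀ i j, w i j < N) (hw' : ∀ i j, w' i j < N)
    (h : ∀ j, mval N n w j = mval N n w' j) : w = w' := by
  have hN : ∀ i (j : ↥I), w i j < N := hw
  funext i j
  have key : ∀ i : Fin n, w (Fin.rev i) j = w' (Fin.rev i) j := by
    have h1 := (mval_eq_rev N n w j).symm.trans ((h j).trans (mval_eq_rev N n w' j))
    set c : Fin n → Fin N := fun i => ⟨w (Fin.rev i) j, hw _ _⟩ with hc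
    set c' : Fin n → Fin N := fun i => ⟨w' (Fin.rev i) j, hw' _ _⟩ with hc'
    have h2 : (finFunctionFinEquiv c : ℕ) = (finFunctionFinEquiv c' : ℕ) := by
      rw [finFunctionFinEquiv_apply, finFunctionFinEquiv_apply]
      exact h1
    have h3 : c = c' := finFunctionFinEquiv.injective (Fin.val_injective h2)
    intro i
    have := congrFun h3 i
    simpa [hc, hc', Fin.ext_iff] using this
  have := key (Fin.rev i)
  rwa [Fin.rev_rev] at this
end count


section count2
variable {N : ℕ}

lemma card_subtype_filter {α : Type*} (s : Finset α) (Q : α → Prop) :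
    (Finset.univ.filter (fun v : ↥s => Q v.1)).card = (s.filter Q).card := by
  refine Finset.card_bij (fun v _ => v.1) ?_ ?_ ?_
  · intro v hv
    simp only [Finset.mem_filter, Finset.mem_univ, true_and] at hv ⊢
    exact ⟨v.2, hv⟩
  · intro a ha b hb h; exact Subtype.ext h
  · intro b hb
    simp only [Finset.mem_filter] at hb
    exact ⟨⟨b, hb.1⟩, by simp [hb.2], rfl⟩

lemma pref_eq_mval (hN : 2 ≤ N) {m : ℕ} {I : Finset (Fin m)} (n : ℕ)
    (p : Fin n → (Fin m → ℕ)) (w : Fin n → (↥I → ℕ)) (hw : ∀ i (j : ↥I), w i j = p i j.1)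
    (j : ↥I) : pref N n p j.1 = (mval N n w j : ℝ) / (N : ℝ) ^ n := by
  have hN0 : (0:ℝ) < N := by positivity
  rw [pref, mval]
  push_cast
  rw [Finset.sum_div]
  refine Finset.sum_congr rfl fun i _ => ?_
  rw [hw i j]
  rw [div_eq_div_iff (by positivity) (by positivity)]
  rw [mul_assoc, ← pow_add]
  congr 2
  omega

lemma count_lemma (hN : 2 ≤ N) {m : ℕ} {A : Finset (Fin m → ℕ)}
    (hAN : ∀ v ∈ A, ∀ j, v j < N) {I : Finset (Fin m)} (r : ℕ)
    (hr : ∀ y : ↥I → ℕ, (A.filter (fun v => (fun i : ↥I => v i.1) = y)).card ≤ r)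
    (n : ℕ) (y₀ : ↥I → ℝ) (δ : ℝ) (hδ0 : 0 ≤ δ) (hδ : δ * (N:ℝ) ^ n ≤ N) :
    (Finset.univ.filter (fun p : Fin n → ↥A =>
      ∃ x ∈ cylSet N A n (fun i => (p i).1), ∀ j : ↥I, |x j.1 - y₀ j| ≤ δ)).card
      ≤ (2 * N + 2) ^ I.card * r ^ n := by
  have hN0 : (0:ℝ) < N := by positivity
  have hNn : (0:ℝ) < (N:ℝ) ^ n := by positivity
  set good := Finset.univ.filter (fun p : Fin n → ↥A =>
      ∃ x ∈ cylSet N A n (fun i => (p i).1), ∀ j : ↥I, |x j.1 - y₀ j| ≤ δ) with hgood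
  set ρ : (Fin n → ↥A) → (Fin n → ↥I → ℕ) := fun p i j => (p i).1 j.1 with hρ
  -- Step A : fibers of ρ have size ≤ r ^ n
  have stepA : good.card ≤ r ^ n * (good.image ρ).card := by
    refine Finset.card_le_mul_card_image good _ (fun w hw => ?_)
    calc (good.filter (fun p => ρ p = w)).card
        ≤ (Finset.univ.filter (fun p : Fin n → ↥A => ρ p = w)).card :=
          Finset.card_le_card (Finset.filter_subset_filter _ (Finset.subset_univ good))
      _ ≤ (Fintype.piFinset (fun i : Fin n =>
            Finset.univ.filter (fun v : ↥A => (fun j : ↥I => v.1 j.1) = w i))).card := by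
          refine Finset.card_le_card (fun p hp => ?_)
          simp only [Finset.mem_filter, Finset.mem_univ, true_and] at hp
          rw [Fintype.mem_piFinset]
          intro i
          simp only [Finset.mem_filter, Finset.mem_univ, true_and]
          funext j
          exact congrFun (congrFun hp i) j
      _ = ∏ i : Fin n, (Finset.univ.filter
            (fun v : ↥A => (fun j : ↥I => v.1 j.1) = w i)).card := Fintype.card_piFinset _
      _ ≤ ∏ _i : Fin n, r := by
          refine Finset.prod_le_prod' (fun i _ => ?_)
          refine le_trans (Finset.card_le_card_of_injOn (fun v => v.1) ?_ ?_) (hr (w i))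
          · intro v hv
            simp only [Finset.mem_filter, Finset.mem_univ, true_and] at hv ⊢
            exact Finset.mem_filter.2 ⟨v.2, by simpa using hv⟩
          · intro a _ b _ h
            exact Subtype.ext h
      _ = r ^ n := by simp
  -- Step B : image of ρ is small
  have stepB : (good.image ρ).card ≤ (2 * N + 2) ^ I.card := by
    set L : ↥I → ℕ := fun j => ⌈(y₀ j - δ) * (N:ℝ) ^ n - 1⌉₊ with hL
    have hmem : ∀ w ∈ good.image ρ, (fun j => mval N n w j) ∈
        Fintype.piFinset (fun j : ↥I => Finset.Icc (L j) (L j + (2 * N + 1))) := by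
      intro w hw
      obtain ⟨p, hp, rfl⟩ := Finset.mem_image.1 hw
      rw [hgood, Finset.mem_filter] at hp
      obtain ⟨-, x, hx, hxy⟩ := hp
      rw [Fintype.mem_piFinset]
      intro j
      have hb := cyl_bounds hN hAN hx j.1
      have hpm := pref_eq_mval hN n (fun i => (p i).1) (ρ p) (fun i j => rfl) j
      set M : ℕ := mval N n (ρ p) j with hM
      rw [hpm] at hb
      have habs := abs_le.1 (hxy j)
      have h1 : (y₀ j - δ) * (N:ℝ) ^ n - 1 ≤ (M : ℝ) := by
        have hxle := hb.2
        have hy : y₀ j - δ ≤ x j.1 := by linarith [habs.1]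
        have hmul := mul_le_mul_of_nonneg_right hy hNn.le
        have hxM : x j.1 * (N:ℝ) ^ n ≤ (M : ℝ) + 1 := by
          have := mul_le_mul_of_nonneg_right hxle hNn.le
          rw [add_mul, div_mul_cancel₀ _ hNn.ne', inv_mul_cancel₀ hNn.ne'] at this
          linarith
        linarith
      have h2 : (M : ℝ) ≤ (y₀ j + δ) * (N:ℝ) ^ n := by
        have hxge := hb.1
        have hy : x j.1 ≤ y₀ j + δ := by linarith [habs.2]
        have hmul := mul_le_mul_of_nonneg_right hy hNn.le
        have hxM : (M : ℝ) ≤ x j.1 * (N:ℝ) ^ n := by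
          have := mul_le_mul_of_nonneg_right hxge hNn.le
          rw [div_mul_cancel₀ _ hNn.ne'] at this
          linarith
        linarith
      rw [Finset.mem_Icc]
      constructor
      · exact Nat.ceil_le.2 h1
      · have h3 : (M : ℝ) ≤ ((L j : ℝ)) + (2 * N + 1) := by
          have h4 : ((y₀ j - δ) * (N:ℝ) ^ n - 1 : ℝ) ≤ (L j : ℝ) := Nat.le_ceil _
          nlinarith [h2, h4, hδ]
        exact_mod_cast h3
    have hinj : Set.InjOn (fun w : Fin n → ↥I → ℕ => (fun j => mval N n w j)) (↑(good.image ρ) : Set (Fin n → ↥I → ℕ)) := by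
      intro w hw w' hw' h
      simp only [Finset.coe_image, Set.mem_image] at hw hw'
      obtain ⟨p, hp, rfl⟩ := hw
      obtain ⟨p', hp', rfl⟩ := hw'
      refine mval_inj N n _ _ (fun i j => hAN _ (p i).2 j.1) (fun i j => hAN _ (p' i).2 j.1)
        (fun j => congrFun h j)
    calc (good.image ρ).card
        ≤ (Fintype.piFinset (fun j : ↥I => Finset.Icc (L j) (L j + (2 * N + 1)))).card :=
          Finset.card_le_card_of_injOn _ hmem hinj
      _ = ∏ j : ↥I, (2 * N + 2) := by
          rw [Fintype.card_piFinset]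
          exact Finset.prod_congr rfl fun j _ => by rw [Nat.card_Icc]; omega
      _ = (2 * N + 2) ^ I.card := by
          rw [Finset.prod_const, Finset.card_univ, Fintype.card_coe]
  calc good.card ≤ r ^ n * (good.image ρ).card := stepA
    _ ≤ r ^ n * (2 * N + 2) ^ I.card := Nat.mul_le_mul_left _ stepB
    _ = (2 * N + 2) ^ I.card * r ^ n := Nat.mul_comm _ _


section piece
variable {N : ℕ} {m : ℕ} {A : Finset (Fin m → ℕ)} {I : Finset (Fin m)}

lemma cover_piece (hN : 2 ≤ N) (hAN : ∀ v ∈ A, ∀ j, v j < N) (r : ℕ)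
    (hr : ∀ y : ↥I → ℕ, (A.filter (fun v => (fun i : ↥I => v i.1) = y)).card ≤ r)
    (n : ℕ) (U : Set (↥I → ℝ)) (y₀ : ↥I → ℝ) (hy₀ : y₀ ∈ U) (δ : ℝ) (hδ0 : 0 ≤ δ)
    (hδdiam : EMetric.diam U ≤ ENNReal.ofReal δ) (hδN : δ * (N:ℝ) ^ n ≤ N)
    (X : Set (Fin m → ℝ)) (hX : X ⊆ cantorDigitSetPi N (↑A : Set (Fin m → ℕ)))
    (u : ℝ) (hu : 0 ≤ u) :
    ∃ c : ℕ → Set (Fin m → ℝ),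
      (X ∩ ((fun x : Fin m → ℝ => fun i : ↥I => x i.1) ⁻¹' U) ⊆ ⋃ i, c i) ∧
      (∀ i, EMetric.diam (c i) ≤ ENNReal.ofReal (((N : ℝ) ^ n)⁻¹)) ∧
      ∑' i, ⨆ _ : (c i).Nonempty, EMetric.diam (c i) ^ u ≤
        (((2 * N + 2) ^ I.card * r ^ n : ℕ) : ℝ≥0∞) * ENNReal.ofReal (((N : ℝ) ^ n)⁻¹) ^ u := by
  set good := Finset.univ.filter (fun p : Fin n → ↥A =>
      ∃ x ∈ cylSet N A n (fun i => (p i).1), ∀ j : ↥I, |x j.1 - y₀ j| ≤ δ) with hgood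
  set l := good.toList with hl
  refine ⟨fun i => if h : i < l.length then cylSet N A n (fun k => ((l.get ⟨i, h⟩) k).1) else ∅,
    ?_, ?_, ?_⟩
  · rintro x ⟨hxX, hxU⟩
    obtain ⟨a, ha, hval⟩ := hX hxX
    set p : Fin n → ↥A := fun i => ⟨a i.1, ha i.1⟩ with hp
    have hxcyl : x ∈ cylSet N A n (fun i => (p i).1) := ⟨a, ha, fun i => rfl, hval⟩
    have hpg : p ∈ good := by
      rw [hgood, Finset.mem_filter]
      refine ⟨Finset.mem_univ _, x, hxcyl, fun j => ?_⟩
      have h1 : edist ((fun i : ↥I => x i.1)) y₀ ≤ ENNReal.ofReal δ :=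
        le_trans (EMetric.edist_le_diam_of_mem hxU hy₀) hδdiam
      have h2 : dist ((fun i : ↥I => x i.1)) y₀ ≤ δ := by
        rw [edist_dist] at h1
        exact (ENNReal.ofReal_le_ofReal_iff hδ0).1 h1
      have h3 := (dist_le_pi_dist ((fun i : ↥I => x i.1)) y₀ j).trans h2
      rwa [Real.dist_eq] at h3
    have hpl : p ∈ l := by rw [hl]; exact Finset.mem_toList.2 hpg
    obtain ⟨k, hkp⟩ := List.get_of_mem hpl
    refine Set.mem_iUnion.2 ⟨k.1, ?_⟩
    rw [dif_pos k.2]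
    have : l.get ⟨k.1, k.2⟩ = p := by simpa using hkp
    rw [this]
    exact hxcyl
  · intro i
    by_cases h : i < l.length
    · simp only [h, dif_pos]
      exact cyl_diam hN hAN _
    · simp only [h, dif_neg, not_false_iff, EMetric.diam_empty, zero_le]
      exact (show EMetric.diam (∅ : Set (Fin m → ℝ)) = 0 from Metric.ediam_empty).le.trans zero_le
  · have hzero : ∀ i ∉ Finset.range l.length,
        (⨆ _ : ((if h : i < l.length then cylSet N A n (fun k => ((l.get ⟨i, h⟩) k).1)
          else ∅ : Set (Fin m → ℝ))).Nonempty,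
          EMetric.diam (if h : i < l.length then cylSet N A n (fun k => ((l.get ⟨i, h⟩) k).1)
          else ∅) ^ u) = 0 := by
      intro i hi
      rw [Finset.mem_range] at hi
      simp [dif_neg hi, Set.not_nonempty_empty]
    rw [tsum_eq_sum hzero]
    have hterm : ∀ i ∈ Finset.range l.length,
        (⨆ _ : ((if h : i < l.length then cylSet N A n (fun k => ((l.get ⟨i, h⟩) k).1)
          else ∅ : Set (Fin m → ℝ))).Nonempty,
          EMetric.diam (if h : i < l.length then cylSet N A n (fun k => ((l.get ⟨i, h⟩) k).1)
          else ∅) ^ u) ≤ ENNReal.ofReal (((N : ℝ) ^ n)⁻¹) ^ u := by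
      intro i hi
      rw [Finset.mem_range] at hi
      refine iSup_le fun _ => ?_
      rw [dif_pos hi]
      exact ENNReal.rpow_le_rpow (cyl_diam hN hAN _) hu
    calc ∑ i ∈ Finset.range l.length, _ ≤
        (Finset.range l.length).card • (ENNReal.ofReal (((N : ℝ) ^ n)⁻¹) ^ u) :=
          Finset.sum_le_card_nsmul _ _ _ hterm
      _ = (good.card : ℝ≥0∞) * ENNReal.ofReal (((N : ℝ) ^ n)⁻¹) ^ u := by
          rw [Finset.card_range, nsmul_eq_mul]
          congr 1
          rw [hl, Finset.length_toList]
      _ ≤ (((2 * N + 2) ^ I.card * r ^ n : ℕ) : ℝ≥0∞) * ENNReal.ofReal (((N : ℝ) ^ n)⁻¹) ^ u := by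
          refine mul_le_mul_left ?_ _
          exact_mod_cast count_lemma hN hAN r hr n y₀ δ hδ0 hδN
end piece


section main
variable {N m : ℕ} {A : Finset (Fin m → ℕ)} {I : Finset (Fin m)}

/-- the key real computation -/
lemma real_key (hN : 2 ≤ N) {r : ℕ} {dd : ℝ} (hrd : (N:ℝ) ^ dd = (r:ℝ)) (n : ℕ) (u : ℝ) :
    (r:ℝ) ^ n * (((N:ℝ) ^ n)⁻¹) ^ u = (((N:ℝ) ^ n)⁻¹) ^ (u - dd) := by
  have hN1 : (1:ℝ) < N := by exact_mod_cast hN.trans_lt' one_lt_two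
  have hN0 : (0:ℝ) < N := by linarith
  have h1 : ((N:ℝ) ^ n)⁻¹ = (N:ℝ) ^ (-(n:ℝ)) := by
    rw [Real.rpow_neg hN0.le, Real.rpow_natCast]
  have h2 : (r:ℝ) ^ n = (N:ℝ) ^ (dd * n) := by
    rw [← hrd, ← Real.rpow_natCast ((N:ℝ) ^ dd) n, ← Real.rpow_mul hN0.le]
  rw [h1, h2, ← Real.rpow_mul hN0.le, ← Real.rpow_mul hN0.le, ← Real.rpow_add hN0]
  congr 1
  ring

lemma main_zero (hN : 2 ≤ N) (hAN : ∀ v ∈ A, ∀ j, v j < N) (r : ℕ)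
    (hr : ∀ y : ↥I → ℕ, (A.filter (fun v => (fun i : ↥I => v i.1) = y)).card ≤ r)
    (u s dd : ℝ) (hs : 0 < s) (hdd0 : 0 ≤ dd) (hrd : (N:ℝ) ^ dd = (r:ℝ))
    (hu : s + dd ≤ u)
    (X : Set (Fin m → ℝ)) (hX : X ⊆ cantorDigitSetPi N (↑A : Set (Fin m → ℕ)))
    (hY : μH[s] ((fun x : Fin m → ℝ => fun i : ↥I => x i.1) '' X) = 0) :
    μH[u] X = 0 := by
  have hN1 : (1:ℝ) < N := by exact_mod_cast hN.trans_lt' one_lt_two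
  have hN0 : (0:ℝ) < N := by linarith
  have hu0 : 0 < u := by linarith
  have husd : 0 < u - dd := by linarith
  set π : (Fin m → ℝ) → (↥I → ℝ) := fun x => fun i : ↥I => x i.1 with hπ
  set Y := π '' X with hYdef
  set C₁ : ℝ≥0∞ := (((2 * N + 2) ^ I.card : ℕ) : ℝ≥0∞) with hC₁
  have hC₁0 : C₁ ≠ 0 := by
    have : 0 < (2 * N + 2) ^ I.card := pow_pos (by omega) _
    exact_mod_cast Nat.cast_ne_zero.2 this.ne'
  have hC₁top : C₁ ≠ ∞ := ENNReal.natCast_ne_top _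
  refine le_antisymm ?_ zero_le
  refine ENNReal.le_of_forall_pos_le_add fun ε hε _ => ?_
  rw [zero_add]
  rw [MeasureTheory.Measure.hausdorffMeasure_apply]
  refine iSup₂_le fun R hR => ?_
  set R' : ℝ≥0∞ := min R 1 with hR'def
  have hR' : 0 < R' := lt_min hR zero_lt_one
  have hR'top : R' ≠ ∞ := by
    simp only [hR'def, ne_eq, min_eq_top, not_and_or]
    right; exact ENNReal.one_ne_top
  have hR'1 : R' ≤ 1 := min_le_right _ _
  have hR'R : R' ≤ R := min_le_left _ _
  -- extract a cover of Y at scale R'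
  have hY' := hY
  rw [MeasureTheory.Measure.hausdorffMeasure_apply] at hY'
  have hle : (⨅ (t : ℕ → Set (↥I → ℝ)) (_ : Y ⊆ ⋃ n, t n)
      (_ : ∀ n, EMetric.diam (t n) ≤ R'),
      ∑' n, ⨆ _ : (t n).Nonempty, EMetric.diam (t n) ^ s) = 0 := by
    refine le_antisymm ?_ zero_le
    rw [← hY']
    exact le_iSup₂ (f := fun (r : ℝ≥0∞) (_ : 0 < r) =>
      ⨅ (t : ℕ → Set (↥I → ℝ)) (_ : Y ⊆ ⋃ n, t n) (_ : ∀ n, EMetric.diam (t n) ≤ r),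
        ∑' n, ⨆ _ : (t n).Nonempty, EMetric.diam (t n) ^ s) R' hR'
  set ε₁ : ℝ≥0∞ := ((ε : ℝ≥0∞) / 2) / C₁ with hε₁def
  have hε₁pos : 0 < ε₁ :=
    ENNReal.div_pos (ENNReal.div_pos (by exact_mod_cast hε.ne') ENNReal.ofNat_ne_top).ne' hC₁top
  obtain ⟨t, ht⟩ : ∃ t : ℕ → Set (↥I → ℝ), (⨅ (_ : Y ⊆ ⋃ n, t n)
      (_ : ∀ n, EMetric.diam (t n) ≤ R'),
      ∑' n, ⨆ _ : (t n).Nonempty, EMetric.diam (t n) ^ s) < ε₁ :=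
    iInf_lt_iff.1 (hle ▸ hε₁pos)
  obtain ⟨hcov, ht2⟩ := iInf_lt_iff.1 ht
  obtain ⟨hdiam, hsum⟩ := iInf_lt_iff.1 ht2
  have hsum' : ∑' k, ⨆ _ : (t k).Nonempty, EMetric.diam (t k) ^ s ≤ ε₁ := hsum.le
  have hεR : (0:ℝ) < (ε:ℝ) := hε
  -- conversion of the counting bound
  have convert_bound : ∀ n : ℕ,
      (((2 * N + 2) ^ I.card * r ^ n : ℕ) : ℝ≥0∞) * ENNReal.ofReal (((N:ℝ) ^ n)⁻¹) ^ u
        = C₁ * ENNReal.ofReal ((((N:ℝ) ^ n)⁻¹) ^ (u - dd)) := by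
    intro n
    have hx : (0:ℝ) < ((N:ℝ) ^ n)⁻¹ := by positivity
    rw [Nat.cast_mul, mul_assoc, ENNReal.ofReal_rpow_of_pos hx]
    congr 1
    have h1 : ((r ^ n : ℕ) : ℝ≥0∞) = ENNReal.ofReal ((r:ℝ) ^ n) := by
      rw [← ENNReal.ofReal_natCast (r ^ n)]
      congr 1
      push_cast
      ring
    rw [h1, ← ENNReal.ofReal_mul (by positivity), real_key hN hrd n u]
  have key : ∀ k : ℕ, ∃ c : ℕ → Set (Fin m → ℝ),
      (X ∩ π ⁻¹' (t k) ⊆ ⋃ i, c i) ∧ (∀ i, EMetric.diam (c i) ≤ R) ∧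
      (∑' i, ⨆ _ : (c i).Nonempty, EMetric.diam (c i) ^ u ≤
        C₁ * (⨆ _ : (t k).Nonempty, EMetric.diam (t k) ^ s)
          + ENNReal.ofReal ((ε:ℝ)/4 * (1/2)^k)) := by
    intro k
    by_cases hYt : (Y ∩ t k).Nonempty
    · obtain ⟨y₀, hy₀Y, hy₀t⟩ := hYt
      have htne : (t k).Nonempty := ⟨y₀, hy₀t⟩
      have hR'lt : R' < ∞ := lt_of_le_of_lt hR'1 ENNReal.one_lt_top
      have hδktop : EMetric.diam (t k) ≠ ∞ := ((hdiam k).trans_lt hR'lt).ne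
      set δr : ℝ := (EMetric.diam (t k)).toReal with hδrdef
      have hδr0 : 0 ≤ δr := ENNReal.toReal_nonneg
      have hδreq : EMetric.diam (t k) = ENNReal.ofReal δr := (ENNReal.ofReal_toReal hδktop).symm
      have hδr1 : δr ≤ 1 := by
        have := ENNReal.toReal_mono ENNReal.one_ne_top ((hdiam k).trans hR'1)
        simpa using this
      by_cases hpos : 0 < δr
      · -- positive diameter piece
        have hex : ∃ n : ℕ, ((N:ℝ) ^ n)⁻¹ ≤ δr := by
          obtain ⟨n, hn⟩ := exists_pow_lt_of_lt_one hpos (inv_lt_one_of_one_lt₀ hN1)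
          refine ⟨n, ?_⟩
          rw [← inv_pow]
          exact hn.le
        set n := Nat.find hex with hnn
        have hn1 : ((N:ℝ) ^ n)⁻¹ ≤ δr := Nat.find_spec hex
        have hδN : δr * (N:ℝ) ^ n ≤ N := by
          rcases Nat.eq_zero_or_pos n with h0 | h0
          · rw [h0, pow_zero, mul_one]; linarith
          · have hmin : ¬ ((N:ℝ) ^ (n-1))⁻¹ ≤ δr := Nat.find_min hex (by omega)
            push_neg at hmin
            have hsplit : (N:ℝ) ^ n = (N:ℝ) ^ (n-1) * N := by
              rw [← pow_succ]
              congr 1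
              omega
            have hp0 : (0:ℝ) < (N:ℝ) ^ (n-1) := by positivity
            have h2 : δr * (N:ℝ) ^ (n-1) ≤ 1 := by
              rw [← le_div_iff₀ hp0, one_div]
              exact hmin.le
            calc δr * (N:ℝ) ^ n = δr * (N:ℝ) ^ (n-1) * N := by rw [hsplit, mul_assoc]
              _ ≤ 1 * N := by
                  exact mul_le_mul_of_nonneg_right h2 hN0.le
              _ = N := one_mul _
        obtain ⟨c, hc1, hc2, hc3⟩ := cover_piece hN hAN r hr n (t k) y₀ hy₀t δr hδr0
          (le_of_eq hδreq) hδN X hX u hu0.le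
        refine ⟨c, hc1, fun i => (hc2 i).trans ?_, ?_⟩
        · calc ENNReal.ofReal (((N:ℝ) ^ n)⁻¹) ≤ ENNReal.ofReal δr := ENNReal.ofReal_le_ofReal hn1
            _ = EMetric.diam (t k) := hδreq.symm
            _ ≤ R' := hdiam k
            _ ≤ R := hR'R
        · refine hc3.trans ?_
          rw [convert_bound n]
          refine le_trans ?_ le_self_add
          rw [iSup_pos htne]
          refine mul_le_mul_right ?_ _
          have hreal : (((N:ℝ) ^ n)⁻¹) ^ (u - dd) ≤ δr ^ s := by
            have ha : (((N:ℝ) ^ n)⁻¹) ^ (u - dd) ≤ δr ^ (u - dd) :=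
              Real.rpow_le_rpow (by positivity) hn1 husd.le
            have hb : δr ^ (u - dd) = δr ^ s * δr ^ (u - dd - s) := by
              rw [← Real.rpow_add hpos]
              congr 1
              ring
            have hc : δr ^ (u - dd - s) ≤ 1 := Real.rpow_le_one hδr0 hδr1 (by linarith)
            have hd : (0:ℝ) ≤ δr ^ s := Real.rpow_nonneg hδr0 _
            nlinarith
          calc ENNReal.ofReal ((((N:ℝ) ^ n)⁻¹) ^ (u - dd)) ≤ ENNReal.ofReal (δr ^ s) :=
              ENNReal.ofReal_le_ofReal hreal
            _ = ENNReal.ofReal δr ^ s := (ENNReal.ofReal_rpow_of_pos hpos).symm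
            _ = EMetric.diam (t k) ^ s := by rw [← hδreq]
      · -- zero diameter piece
        have hδr00 : δr = 0 := by linarith [not_lt.1 hpos]
        have hdiam0 : EMetric.diam (t k) = 0 := by
          rw [hδreq, hδr00, ENNReal.ofReal_zero]
        have hRt : 0 < R'.toReal := ENNReal.toReal_pos hR'.ne' hR'top
        set C₁r : ℝ := (((2 * N + 2) ^ I.card : ℕ) : ℝ) with hC₁r
        have hC₁rpos : (0:ℝ) < C₁r := by
          rw [hC₁r]
          exact_mod_cast pow_pos (by omega) I.card
        set θ : ℝ := ((ε:ℝ)/4 * (1/2)^k / C₁r) ^ (u - dd)⁻¹ with hθ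
        have hbasepos : (0:ℝ) < (ε:ℝ)/4 * (1/2)^k / C₁r := by positivity
        have hθpos : 0 < θ := Real.rpow_pos_of_pos hbasepos _
        obtain ⟨n, hn⟩ := exists_pow_lt_of_lt_one (lt_min hRt hθpos) (inv_lt_one_of_one_lt₀ hN1)
        rw [inv_pow] at hn
        have hnR : ((N:ℝ) ^ n)⁻¹ ≤ R'.toReal := (hn.trans_le (min_le_left _ _)).le
        have hnθ : ((N:ℝ) ^ n)⁻¹ ≤ θ := (hn.trans_le (min_le_right _ _)).le
        obtain ⟨c, hc1, hc2, hc3⟩ := cover_piece hN hAN r hr n (t k) y₀ hy₀t 0 le_rfl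
          (by rw [hdiam0, ENNReal.ofReal_zero]) (by rw [zero_mul]; exact hN0.le) X hX u hu0.le
        refine ⟨c, hc1, fun i => (hc2 i).trans ?_, ?_⟩
        · calc ENNReal.ofReal (((N:ℝ) ^ n)⁻¹) ≤ ENNReal.ofReal R'.toReal :=
              ENNReal.ofReal_le_ofReal hnR
            _ = R' := ENNReal.ofReal_toReal hR'top
            _ ≤ R := hR'R
        · refine hc3.trans ?_
          rw [convert_bound n]
          refine le_trans ?_ le_add_self
          have hreal : C₁r * (((N:ℝ) ^ n)⁻¹) ^ (u - dd) ≤ (ε:ℝ)/4 * (1/2)^k := by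
            have h1 : (((N:ℝ) ^ n)⁻¹) ^ (u - dd) ≤ θ ^ (u - dd) :=
              Real.rpow_le_rpow (by positivity) hnθ husd.le
            have h2 : θ ^ (u - dd) = (ε:ℝ)/4 * (1/2)^k / C₁r := by
              rw [hθ, ← Real.rpow_mul hbasepos.le, inv_mul_cancel₀ husd.ne', Real.rpow_one]
            rw [h2] at h1
            calc C₁r * (((N:ℝ) ^ n)⁻¹) ^ (u - dd) ≤ C₁r * ((ε:ℝ)/4 * (1/2)^k / C₁r) :=
                mul_le_mul_of_nonneg_left h1 hC₁rpos.le
              _ = (ε:ℝ)/4 * (1/2)^k := by field_simp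
          calc C₁ * ENNReal.ofReal ((((N:ℝ) ^ n)⁻¹) ^ (u - dd))
              = ENNReal.ofReal (C₁r * (((N:ℝ) ^ n)⁻¹) ^ (u - dd)) := by
                rw [ENNReal.ofReal_mul hC₁rpos.le]
                congr 1
                rw [hC₁, hC₁r, ENNReal.ofReal_natCast]
            _ ≤ ENNReal.ofReal ((ε:ℝ)/4 * (1/2)^k) := ENNReal.ofReal_le_ofReal hreal
    · -- t k does not meet Y
      refine ⟨fun _ => ∅, ?_, ?_, ?_⟩
      · intro x hx
        exact absurd ⟨π x, ⟨x, hx.1, rfl⟩, hx.2⟩ hYt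
      · intro i
        simp only [EMetric.diam_empty]
        simp [EMetric.diam, Metric.ediam_empty]
      · simp [Set.not_nonempty_empty]
  -- combine the covers
  choose c hcov' hdiam' hsum'' using key
  set T : ℕ → Set (Fin m → ℝ) := fun n => c (Nat.unpair n).1 (Nat.unpair n).2 with hT
  refine iInf₂_le_of_le T ?_ (iInf_le_of_le ?_ ?_)
  · -- T covers X
    intro x hx
    have : π x ∈ Y := ⟨x, hx, rfl⟩
    obtain ⟨k, hk⟩ := Set.mem_iUnion.1 (hcov this)
    obtain ⟨i, hi⟩ := Set.mem_iUnion.1 (hcov' k ⟨hx, hk⟩)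
    refine Set.mem_iUnion.2 ⟨Nat.pair k i, ?_⟩
    show x ∈ c (Nat.unpair (Nat.pair k i)).1 (Nat.unpair (Nat.pair k i)).2
    rw [Nat.unpair_pair]
    exact hi
  · exact fun n => hdiam' _ _
  · -- the sum estimate
    have hTsum : ∑' n, ⨆ _ : (T n).Nonempty, EMetric.diam (T n) ^ u
        = ∑' (k : ℕ) (i : ℕ), ⨆ _ : (c k i).Nonempty, EMetric.diam (c k i) ^ u := by
      rw [← ENNReal.tsum_prod]
      rw [← Equiv.tsum_eq Nat.pairEquiv
        (fun n => ⨆ _ : (T n).Nonempty, EMetric.diam (T n) ^ u)]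
      refine tsum_congr fun p => ?_
      have : T (Nat.pairEquiv p) = c p.1 p.2 := by
        show c (Nat.unpair (Nat.pair p.1 p.2)).1 (Nat.unpair (Nat.pair p.1 p.2)).2 = c p.1 p.2
        rw [Nat.unpair_pair]
      rw [this]
    refine le_trans (le_of_eq hTsum) ?_
    calc ∑' (k : ℕ) (i : ℕ), ⨆ _ : (c k i).Nonempty, EMetric.diam (c k i) ^ u
        ≤ ∑' (k : ℕ), (C₁ * (⨆ _ : (t k).Nonempty, EMetric.diam (t k) ^ s)
            + ENNReal.ofReal ((ε:ℝ)/4 * (1/2)^k)) := ENNReal.tsum_le_tsum hsum''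
      _ = C₁ * (∑' k, ⨆ _ : (t k).Nonempty, EMetric.diam (t k) ^ s)
            + ∑' k, ENNReal.ofReal ((ε:ℝ)/4 * (1/2)^k) := by
          rw [ENNReal.tsum_add, ENNReal.tsum_mul_left]
      _ ≤ C₁ * ε₁ + ∑' k, ENNReal.ofReal ((ε:ℝ)/4 * (1/2)^k) := by
          exact add_le_add_left (mul_le_mul_right hsum' _) _
      _ ≤ (ε : ℝ≥0∞) / 2 + (ε : ℝ≥0∞) / 2 := by
          refine add_le_add ?_ ?_
          · rw [hε₁def]
            exact ENNReal.mul_div_le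
          · have hgeo : ∀ k : ℕ, ENNReal.ofReal ((ε:ℝ)/4 * (1/2)^k)
                = ENNReal.ofReal ((ε:ℝ)/4) * (ENNReal.ofReal (1/2)) ^ k := by
              intro k
              rw [ENNReal.ofReal_mul (by positivity), ENNReal.ofReal_pow (by norm_num)]
            simp only [hgeo]
            rw [ENNReal.tsum_mul_left, ENNReal.tsum_geometric]
            have hhalf : ENNReal.ofReal (1/2 : ℝ) = 2⁻¹ := by
              rw [ENNReal.ofReal_div_of_pos (by norm_num)]
              norm_num
            rw [hhalf, ENNReal.one_sub_inv_two, inv_inv]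
            have h4 : ENNReal.ofReal ((ε:ℝ)/4) = (ε : ℝ≥0∞) / 4 := by
              rw [ENNReal.ofReal_div_of_pos (by norm_num), ENNReal.ofReal_coe_nnreal]
              norm_num
            rw [h4, div_eq_mul_inv, mul_assoc,
              show (4:ℝ≥0∞)⁻¹ * 2 = 2⁻¹ by
                rw [show (4:ℝ≥0∞) = 2*2 by norm_num,
                  ENNReal.mul_inv (by norm_num) (by norm_num), mul_assoc,
                  ENNReal.inv_mul_cancel (by norm_num) (by norm_num), mul_one],
              ← div_eq_mul_inv]
      _ = (ε : ℝ≥0∞) := ENNReal.add_halves _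

end main


/-- If the projection `π_I : A → A_I` is uniform, then for every `X ⊆ C_A`,
`dim_H X ≤ dim_H X_I + d` where `d = log(|A|/|A_I|)/log N`. -/
theorem dimH_le_proj_add_of_uniform (N : ℕ) (hN : 2 ≤ N) {m : ℕ}
    (A : Finset (Fin m → ℕ)) (hAN : ∀ v ∈ A, ∀ j, v j < N)
    (I : Finset (Fin m)) (hI : I.Nonempty)
    (huniform : ∀ y ∈ A.image (fun v => fun i : I => v i.1),
      (A.filter (fun v => (fun i : I => v i.1) = y)).card *
        (A.image (fun v => fun i : I => v i.1)).card = A.card) :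
    ∀ X ⊆ cantorDigitSetPi N (↑A : Set (Fin m → ℕ)),
      dimH X ≤ dimH ((fun x : Fin m → ℝ => fun i : I => x i.1) '' X) +
        ENNReal.ofReal
          (Real.log ((A.card : ℝ) / ((A.image (fun v => fun i : I => v i.1)).card : ℝ)) /
            Real.log N) := by
  intro X hX
  rcases A.eq_empty_or_nonempty with hA | hA
  · have hXe : X = ∅ := by
      rw [← Set.subset_empty_iff]
      intro x hx
      obtain ⟨a, ha, -⟩ := hX hx
      have := ha 0
      rw [hA] at this
      simp at this
    rw [hXe, dimH_empty]
    exact zero_le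
  -- nonempty case
  set B := A.image (fun v => fun i : ↥I => v i.1) with hB
  have hBne : B.Nonempty := hA.image _
  have hBpos : 0 < B.card := Finset.card_pos.2 hBne
  set r : ℕ := A.card / B.card with hrdef
  have hfilter_eq : ∀ y ∈ B, (A.filter (fun v => (fun i : ↥I => v i.1) = y)).card = r := by
    intro y hy
    have h := huniform y hy
    rw [hrdef, ← h, Nat.mul_div_cancel _ hBpos]
  have hr : ∀ y : ↥I → ℕ, (A.filter (fun v => (fun i : ↥I => v i.1) = y)).card ≤ r := by
    intro y
    by_cases hy : y ∈ B
    · exact (hfilter_eq y hy).le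
    · have : A.filter (fun v => (fun i : ↥I => v i.1) = y) = ∅ := by
        refine Finset.filter_eq_empty_iff.2 fun v hv hvy => hy ?_
        rw [hB]
        exact Finset.mem_image.2 ⟨v, hv, hvy⟩
      rw [this]
      simp
  have hrB : r * B.card = A.card := by
    obtain ⟨y, hy⟩ := hBne
    rw [← hfilter_eq y hy]
    exact huniform y hy
  have hr1 : 1 ≤ r := by
    obtain ⟨v, hv⟩ := hA
    have hy : (fun i : ↥I => v i.1) ∈ B := Finset.mem_image_of_mem _ hv
    have : v ∈ A.filter (fun w => (fun i : ↥I => w i.1) = (fun i : ↥I => v i.1)) :=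
      Finset.mem_filter.2 ⟨hv, rfl⟩
    have hc : 0 < (A.filter (fun w => (fun i : ↥I => w i.1) = (fun i : ↥I => v i.1))).card :=
      Finset.card_pos.2 ⟨v, this⟩
    rwa [hfilter_eq _ hy] at hc
  have hN0 : (0:ℝ) < N := by positivity
  have hN1 : (1:ℝ) < N := by exact_mod_cast hN.trans_lt' one_lt_two
  have hlogN : 0 < Real.log N := Real.log_pos hN1
  have hr0 : (0:ℝ) < r := by exact_mod_cast hr1
  have hratio : (A.card : ℝ) / (B.card : ℝ) = (r : ℝ) := by
    rw [← hrB]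
    push_cast
    rw [mul_div_assoc, div_self (by exact_mod_cast hBpos.ne'), mul_one]
  set d : ℝ := Real.log ((A.card : ℝ) / (B.card : ℝ)) / Real.log N with hd
  have hd0 : 0 ≤ d := by
    apply div_nonneg _ hlogN.le
    rw [hratio]
    exact Real.log_nonneg (by exact_mod_cast hr1)
  have hrd : (N:ℝ) ^ d = (r:ℝ) := by
    rw [hd, hratio, Real.rpow_def_of_pos hN0, mul_comm, div_mul_cancel₀ _ hlogN.ne', Real.exp_log hr0]
  -- main dimension bound
  set Y := (fun x : Fin m → ℝ => fun i : ↥I => x i.1) '' X with hY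
  show dimH X ≤ dimH Y + ENNReal.ofReal d
  refine dimH_le fun u' hu' => ?_
  by_contra hcon
  push_neg at hcon
  have hfin : dimH Y < ⊤ := lt_of_le_of_lt le_self_add (hcon.trans_le le_top)
  set D := (dimH Y).toReal with hD
  have hD0 : 0 ≤ D := ENNReal.toReal_nonneg
  have hDlt : D + d < (u' : ℝ) := by
    have h1 : (dimH Y + ENNReal.ofReal d).toReal < ((u' : ℝ≥0∞)).toReal :=
      ENNReal.toReal_strict_mono ENNReal.coe_ne_top hcon
    rwa [ENNReal.toReal_add hfin.ne ENNReal.ofReal_ne_top, ENNReal.toReal_ofReal hd0,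
      ENNReal.coe_toReal] at h1
  set s : ℝ := D + ((u' : ℝ) - d - D) / 2 with hs
  have hspos : 0 < s := by
    rw [hs]
    have : 0 < (u' : ℝ) - d - D := by linarith
    linarith
  have hsd : s + d ≤ (u' : ℝ) := by rw [hs]; linarith
  have hdim_lt : dimH Y < ENNReal.ofReal s := by
    have : dimH Y = ENNReal.ofReal D := (ENNReal.ofReal_toReal hfin.ne).symm
    rw [this]
    refine (ENNReal.ofReal_lt_ofReal_iff hspos).2 ?_
    rw [hs]
    linarith
  have hμY : μH[s] Y = 0 := by
    have h0 : dimH Y < (s.toNNReal : ℝ≥0∞) := hdim_lt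
    have := hausdorffMeasure_of_dimH_lt h0
    rwa [Real.coe_toNNReal _ hspos.le] at this
  have hμX : μH[(u' : ℝ)] X = 0 :=
    main_zero hN hAN r hr (u' : ℝ) s d hspos hd0 hrd hsd X hX (by rw [← hY]; exact hμY)
  rw [hu'] at hμX
  exact ENNReal.top_ne_zero hμX
end count2
end

section
/- For every set S ⊆ ℝ³ with two-dimensional coordinate projections S₁₂, S₁₃, S₂₃, the packing dimension satisfies 2·dim_p(S) ≤ dim_p(S₁₂) + dim_p(S₁₃) + dim_p(S₂₃). -/
open scoped ENNReal
open Filter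

section Aux
theorem lw_discrete {α β γ : Type*} [DecidableEq α] [DecidableEq β] [DecidableEq γ]
    (A : Finset (α × β × γ)) :
    A.card ^ 2 ≤ (A.image fun p => (p.1, p.2.1)).card *
      ((A.image fun p => (p.1, p.2.2)).card * (A.image fun p => (p.2.1, p.2.2)).card) := by
  classical
  set P := A.image fun p => (p.1, p.2.1) with hP
  set fib : α × β → Finset (α × β × γ) := fun q => A.filter fun p => (p.1, p.2.1) = q with hfib
  have hcard : A.card = ∑ q ∈ P, (fib q).card :=
    Finset.card_eq_sum_card_fiberwise (fun p hp => Finset.mem_image_of_mem _ hp)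
  have CS : A.card ^ 2 ≤ P.card * ∑ q ∈ P, (fib q).card ^ 2 := by
    have := sq_sum_le_card_mul_sum_sq (s := P) (f := fun q => ((fib q).card : ℤ))
    have h2 : ((A.card : ℤ))^2 ≤ (P.card : ℤ) * ∑ q ∈ P, ((fib q).card : ℤ)^2 := by
      rw [hcard]; push_cast; exact this
    exact_mod_cast h2
  have hdisj : ∀ q₁ ∈ P, ∀ q₂ ∈ P, q₁ ≠ q₂ →
      Disjoint (fib q₁ ×ˢ fib q₁) (fib q₂ ×ˢ fib q₂) := by
    intro q₁ _ q₂ _ hne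
    refine Finset.disjoint_left.2 fun x hx hx' => hne ?_
    have h1 := (Finset.mem_product.1 hx).1
    have h2 := (Finset.mem_product.1 hx').1
    rw [hfib, Finset.mem_filter] at h1 h2
    exact h1.2.symm.trans h2.2
  have hsum : ∑ q ∈ P, (fib q).card ^ 2 = (P.biUnion fun q => fib q ×ˢ fib q).card := by
    rw [Finset.card_biUnion hdisj]
    simp [Finset.card_product, sq]
  have hinj : (P.biUnion fun q => fib q ×ˢ fib q).card ≤
      ((A.image fun p => (p.1, p.2.2)) ×ˢ (A.image fun p => (p.2.1, p.2.2))).card := by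
    apply Finset.card_le_card_of_injOn
      (fun x => ((x.1.1, x.1.2.2), (x.2.2.1, x.2.2.2)))
    · intro x hx
      obtain ⟨q, _, hx⟩ := Finset.mem_biUnion.1 hx
      have h1 := (Finset.mem_product.1 hx).1
      have h2 := (Finset.mem_product.1 hx).2
      rw [hfib, Finset.mem_filter] at h1 h2
      exact Finset.mem_product.2 ⟨Finset.mem_image_of_mem _ h1.1,
        Finset.mem_image_of_mem _ h2.1⟩
    · intro x hx y hy hxy
      obtain ⟨q, _, hx⟩ := Finset.mem_biUnion.1 hx
      obtain ⟨q', _, hy⟩ := Finset.mem_biUnion.1 hy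
      have hx1 := (Finset.mem_product.1 hx).1
      have hx2 := (Finset.mem_product.1 hx).2
      have hy1 := (Finset.mem_product.1 hy).1
      have hy2 := (Finset.mem_product.1 hy).2
      rw [hfib, Finset.mem_filter] at hx1 hx2 hy1 hy2
      -- from hx1.2 : (x.1.1, x.1.2.1) = q, hx2.2 : (x.2.1, x.2.2.1) = q
      have e1 : x.1.1 = x.2.1 ∧ x.1.2.1 = x.2.2.1 := by
        have := hx1.2.trans hx2.2.symm
        exact ⟨by injection this, by injection this with a b⟩
      have e2 : y.1.1 = y.2.1 ∧ y.1.2.1 = y.2.2.1 := by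
        have := hy1.2.trans hy2.2.symm
        exact ⟨by injection this, by injection this with a b⟩
      have m1 : x.1.1 = y.1.1 := congrArg (fun z => z.1.1) hxy
      have m2 : x.1.2.2 = y.1.2.2 := congrArg (fun z => z.1.2) hxy
      have m3 : x.2.2.1 = y.2.2.1 := congrArg (fun z => z.2.1) hxy
      have m4 : x.2.2.2 = y.2.2.2 := congrArg (fun z => z.2.2) hxy
      have hx12 : x.1.2.1 = y.1.2.1 := by rw [e1.2, e2.2]; exact m3
      have hx21 : x.2.1 = y.2.1 := by rw [← e1.1, ← e2.1]; exact m1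
      exact Prod.ext (Prod.ext m1 (Prod.ext hx12 m2)) (Prod.ext hx21 (Prod.ext m3 m4))
  calc A.card ^ 2 ≤ P.card * ∑ q ∈ P, (fib q).card ^ 2 := CS
    _ ≤ P.card * ((A.image fun p => (p.1, p.2.2)).card * (A.image fun p => (p.2.1, p.2.2)).card) := by
        apply Nat.mul_le_mul_left
        rw [hsum]
        simpa [Finset.card_product] using hinj
    _ = _ := rfl

variable {α : Type*} [PseudoMetricSpace α] {ε : ℝ} {s s' : Set α}

theorem coveringNumber_le_card {t : Finset α} (h : s ⊆ ⋃ x ∈ t, Metric.ball x ε) :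
    coveringNumber ε s ≤ t.card := iInf₂_le t h

theorem coveringNumber_mono (h : s ⊆ s') : coveringNumber ε s ≤ coveringNumber ε s' :=
  le_iInf₂ fun t ht => coveringNumber_le_card (h.trans ht)

theorem coveringNumber_empty : coveringNumber ε (∅ : Set α) = 0 := by
  refine le_antisymm ?_ zero_le
  simpa using coveringNumber_le_card (t := (∅ : Finset α)) (by simp)

theorem one_le_coveringNumber (hs : s.Nonempty) : 1 ≤ coveringNumber ε s := by
  refine le_iInf₂ fun t ht => ?_
  obtain ⟨x, hx⟩ := hs
  have : t.Nonempty := by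
    rcases Set.mem_iUnion₂.1 (ht hx) with ⟨y, hy, -⟩
    exact ⟨y, hy⟩
  simpa using Nat.one_le_iff_ne_zero.2 (Finset.card_ne_zero.2 this)

theorem exists_cover (h : coveringNumber ε s ≠ ⊤) :
    ∃ t : Finset α, (s ⊆ ⋃ x ∈ t, Metric.ball x ε) ∧
      (t.card : ℝ≥0∞) = coveringNumber ε s := by
  have hne : ∃ n : ℕ, ∃ t : Finset α, (s ⊆ ⋃ x ∈ t, Metric.ball x ε) ∧ t.card = n := by
    by_contra hcon
    push_neg at hcon
    apply h
    rw [coveringNumber, iInf_eq_top]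
    intro t
    rw [iInf_eq_top]
    intro ht
    exact absurd rfl (hcon t.card t ht)
  set C := {n : ℕ | ∃ t : Finset α, (s ⊆ ⋃ x ∈ t, Metric.ball x ε) ∧ t.card = n} with hC
  have hCne : C.Nonempty := hne
  obtain ⟨t, ht, hcard⟩ := Nat.sInf_mem hCne
  refine ⟨t, ht, le_antisymm (le_iInf₂ fun t' ht' => ?_) (coveringNumber_le_card ht)⟩
  have : sInf C ≤ t'.card := Nat.sInf_le ⟨t', ht', rfl⟩
  rw [hcard]
  exact_mod_cast this

theorem floor_mem_Icc {ε x c : ℝ} (hε : 0 < ε) (h : |x - c| < ε) :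
    ⌊x / ε⌋ ∈ Finset.Icc (⌊c / ε⌋ - 1) (⌊c / ε⌋ + 1) := by
  rw [abs_sub_lt_iff] at h
  have h1 : x / ε ≤ c / ε + 1 := by
    rw [div_le_iff₀ hε] at *
    rw [add_mul, div_mul_cancel₀ _ hε.ne']
    linarith
  have h2 : c / ε ≤ x / ε + 1 := by
    rw [div_le_iff₀ hε]
    rw [add_mul, div_mul_cancel₀ _ hε.ne']
    linarith
  have f1 : ⌊x / ε⌋ ≤ ⌊c / ε⌋ + 1 := by
    have := Int.floor_le_floor (R := ℝ) h1
    rwa [Int.floor_add_one] at this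
  have f2 : ⌊c / ε⌋ ≤ ⌊x / ε⌋ + 1 := by
    have := Int.floor_le_floor (R := ℝ) h2
    rwa [Int.floor_add_one] at this
  rw [Finset.mem_Icc]
  omega

theorem dist_floor_center {ε x : ℝ} (hε : 0 < ε) :
    |x - ((⌊x / ε⌋ : ℝ) + 1 / 2) * ε| < ε := by
  have h1 : (⌊x / ε⌋ : ℝ) * ε ≤ x := by
    rw [← le_div_iff₀ hε]; exact Int.floor_le _
  have h2 : x < ((⌊x / ε⌋ : ℝ) + 1) * ε := by
    rw [← div_lt_iff₀ hε]; exact Int.lt_floor_add_one _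
  rw [abs_sub_lt_iff]
  constructor <;> nlinarith

/-- Key grid estimate. -/
theorem key_estimate {ε : ℝ} (hε : 0 < ε) (s : Set (ℝ × ℝ × ℝ))
    (T₁₂ T₁₃ T₂₃ : Finset (ℝ × ℝ))
    (h₁₂ : (fun p : ℝ × ℝ × ℝ => (p.1, p.2.1)) '' s ⊆ ⋃ c ∈ T₁₂, Metric.ball c ε)
    (h₁₃ : (fun p : ℝ × ℝ × ℝ => (p.1, p.2.2)) '' s ⊆ ⋃ c ∈ T₁₃, Metric.ball c ε)
    (h₂₃ : (fun p : ℝ × ℝ × ℝ => (p.2.1, p.2.2)) '' s ⊆ ⋃ c ∈ T₂₃, Metric.ball c ε) :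
    coveringNumber ε s ^ 2 ≤
      729 * T₁₂.card * T₁₃.card * T₂₃.card := by
  classical
  set Φ : ℝ × ℝ × ℝ → ℤ × ℤ × ℤ :=
    fun p => (⌊p.1 / ε⌋, ⌊p.2.1 / ε⌋, ⌊p.2.2 / ε⌋) with hΦ
  set box : ℝ × ℝ → Finset (ℤ × ℤ) := fun c =>
    Finset.Icc (⌊c.1 / ε⌋ - 1) (⌊c.1 / ε⌋ + 1) ×ˢ Finset.Icc (⌊c.2 / ε⌋ - 1) (⌊c.2 / ε⌋ + 1)
    with hbox
  have box_card : ∀ c, (box c).card = 9 := by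
    intro c
    rw [hbox]
    simp only [Finset.card_product, Int.card_Icc]
    have e1 : ⌊c.1 / ε⌋ + 1 + 1 - (⌊c.1 / ε⌋ - 1) = 3 := by ring
    have e2 : ⌊c.2 / ε⌋ + 1 + 1 - (⌊c.2 / ε⌋ - 1) = 3 := by ring
    rw [e1, e2]; rfl
  -- membership of discretized projections in boxes
  have mem_box : ∀ (q : ℝ × ℝ) (c : ℝ × ℝ), q ∈ Metric.ball c ε →
      (⌊q.1 / ε⌋, ⌊q.2 / ε⌋) ∈ box c := by
    intro q c hq
    rw [Metric.mem_ball, Prod.dist_eq, max_lt_iff, Real.dist_eq, Real.dist_eq] at hq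
    exact Finset.mem_product.2 ⟨floor_mem_Icc hε hq.1, floor_mem_Icc hε hq.2⟩
  set B₁₂ := T₁₂.biUnion box with hB12
  set B₁₃ := T₁₃.biUnion box with hB13
  set B₂₃ := T₂₃.biUnion box with hB23
  have hB12card : B₁₂.card ≤ 9 * T₁₂.card := by
    refine (Finset.card_biUnion_le).trans ?_
    simp [box_card, mul_comm]
  have hB13card : B₁₃.card ≤ 9 * T₁₃.card := by
    refine (Finset.card_biUnion_le).trans ?_
    simp [box_card, mul_comm]
  have hB23card : B₂₃.card ≤ 9 * T₂₃.card := by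
    refine (Finset.card_biUnion_le).trans ?_
    simp [box_card, mul_comm]
  -- the discretization of s
  have mem12 : ∀ p ∈ s, ((Φ p).1, (Φ p).2.1) ∈ B₁₂ := by
    intro p hp
    obtain ⟨c, hc, hq⟩ := Set.mem_iUnion₂.1 (h₁₂ ⟨p, hp, rfl⟩)
    exact Finset.mem_biUnion.2 ⟨c, hc, mem_box _ c hq⟩
  have mem13 : ∀ p ∈ s, ((Φ p).1, (Φ p).2.2) ∈ B₁₃ := by
    intro p hp
    obtain ⟨c, hc, hq⟩ := Set.mem_iUnion₂.1 (h₁₃ ⟨p, hp, rfl⟩)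
    exact Finset.mem_biUnion.2 ⟨c, hc, mem_box _ c hq⟩
  have mem23 : ∀ p ∈ s, ((Φ p).2.1, (Φ p).2.2) ∈ B₂₃ := by
    intro p hp
    obtain ⟨c, hc, hq⟩ := Set.mem_iUnion₂.1 (h₂₃ ⟨p, hp, rfl⟩)
    exact Finset.mem_biUnion.2 ⟨c, hc, mem_box _ c hq⟩
  have hAfin : (Φ '' s).Finite := by
    apply Set.Finite.subset (Set.Finite.prod (B₁₂.image Prod.fst).finite_toSet
      (Set.Finite.prod (B₁₂.image Prod.snd).finite_toSet (B₁₃.image Prod.snd).finite_toSet))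
    rintro _ ⟨p, hp, rfl⟩
    refine ⟨?_, ?_, ?_⟩
    · exact Finset.mem_coe.2 (Finset.mem_image.2 ⟨_, mem12 p hp, rfl⟩)
    · exact Finset.mem_coe.2 (Finset.mem_image.2 ⟨_, mem12 p hp, rfl⟩)
    · exact Finset.mem_coe.2 (Finset.mem_image.2 ⟨_, mem13 p hp, rfl⟩)
  set A := hAfin.toFinset with hA
  -- covering number bound
  have hcov : coveringNumber ε s ≤ A.card := by
    set ctr : ℤ × ℤ × ℤ → ℝ × ℝ × ℝ := fun a =>
      (((a.1 : ℝ) + 1 / 2) * ε, ((a.2.1 : ℝ) + 1 / 2) * ε, ((a.2.2 : ℝ) + 1 / 2) * ε) with hctr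
    have : s ⊆ ⋃ x ∈ A.image ctr, Metric.ball x ε := by
      intro p hp
      refine Set.mem_iUnion₂.2 ⟨ctr (Φ p), Finset.mem_image_of_mem _ ?_, ?_⟩
      · exact hAfin.mem_toFinset.2 ⟨p, hp, rfl⟩
      · rw [Metric.mem_ball, Prod.dist_eq, Prod.dist_eq]
        simp only [max_lt_iff]
        refine ⟨?_, ?_, ?_⟩ <;>
          · rw [Real.dist_eq]; exact dist_floor_center hε
    exact (coveringNumber_le_card this).trans (by exact_mod_cast Nat.cast_le.2 (Finset.card_image_le))
  -- projection bounds
  have hproj12 : (A.image fun a => (a.1, a.2.1)).card ≤ 9 * T₁₂.card := by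
    refine (Finset.card_le_card ?_).trans hB12card
    intro m hm
    obtain ⟨a, ha, rfl⟩ := Finset.mem_image.1 hm
    obtain ⟨p, hp, rfl⟩ := hAfin.mem_toFinset.1 ha
    exact mem12 p hp
  have hproj13 : (A.image fun a => (a.1, a.2.2)).card ≤ 9 * T₁₃.card := by
    refine (Finset.card_le_card ?_).trans hB13card
    intro m hm
    obtain ⟨a, ha, rfl⟩ := Finset.mem_image.1 hm
    obtain ⟨p, hp, rfl⟩ := hAfin.mem_toFinset.1 ha
    exact mem13 p hp
  have hproj23 : (A.image fun a => (a.2.1, a.2.2)).card ≤ 9 * T₂₃.card := by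
    refine (Finset.card_le_card ?_).trans hB23card
    intro m hm
    obtain ⟨a, ha, rfl⟩ := Finset.mem_image.1 hm
    obtain ⟨p, hp, rfl⟩ := hAfin.mem_toFinset.1 ha
    exact mem23 p hp
  -- combine
  have hnat : A.card ^ 2 ≤ 729 * T₁₂.card * T₁₃.card * T₂₃.card := by
    calc A.card ^ 2 ≤ (A.image fun a => (a.1, a.2.1)).card *
        ((A.image fun a => (a.1, a.2.2)).card * (A.image fun a => (a.2.1, a.2.2)).card) :=
          lw_discrete A
      _ ≤ (9 * T₁₂.card) * ((9 * T₁₃.card) * (9 * T₂₃.card)) := by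
          exact Nat.mul_le_mul hproj12 (Nat.mul_le_mul hproj13 hproj23)
      _ = 729 * T₁₂.card * T₁₃.card * T₂₃.card := by ring
  calc coveringNumber ε s ^ 2 ≤ (A.card : ℝ≥0∞) ^ 2 := pow_le_pow_left' hcov 2
    _ ≤ 729 * T₁₂.card * T₁₃.card * T₂₃.card := by exact_mod_cast Nat.cast_le.2 hnat

theorem elog_top : elog ⊤ = ⊤ := if_pos rfl

theorem elog_coe {x : ℝ≥0∞} (hx : x ≠ ⊤) : elog x = ((Real.log x.toReal : ℝ) : EReal) :=
  if_neg hx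

theorem elog_zero : elog 0 = 0 := by simp [elog]

theorem one_le_toReal {x : ℝ≥0∞} (hx : 1 ≤ x) (hx' : x ≠ ⊤) : 1 ≤ x.toReal := by
  have := ENNReal.toReal_mono hx' hx
  simpa using this

theorem elog_nonneg {x : ℝ≥0∞} (hx : 1 ≤ x) : 0 ≤ elog x := by
  by_cases h : x = ⊤
  · rw [h, elog_top]; exact le_top
  · rw [elog_coe h]
    exact_mod_cast Real.log_nonneg (one_le_toReal hx h)

theorem elog_mono {x y : ℝ≥0∞} (hx : 1 ≤ x) (h : x ≤ y) : elog x ≤ elog y := by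
  by_cases hy : y = ⊤
  · rw [hy, elog_top]; exact le_top
  · have hxt : x ≠ ⊤ := fun hh => hy (top_le_iff.1 (hh ▸ h))
    rw [elog_coe hy, elog_coe hxt]
    exact_mod_cast Real.log_le_log (lt_of_lt_of_le one_pos (one_le_toReal hx hxt))
      (ENNReal.toReal_mono hy h)

theorem elog_mul {x y : ℝ≥0∞} (hx : 1 ≤ x) (hy : 1 ≤ y) :
    elog (x * y) = elog x + elog y := by
  have hx0 : x ≠ 0 := fun h => by simp [h] at hx
  have hy0 : y ≠ 0 := fun h => by simp [h] at hy
  by_cases hxt : x = ⊤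
  · rw [hxt, elog_top, ENNReal.top_mul hy0, elog_top, EReal.top_add_of_ne_bot]
    exact ne_bot_of_le_ne_bot (by simp) (elog_nonneg hy)
  by_cases hyt : y = ⊤
  · rw [hyt, elog_top, ENNReal.mul_top hx0, elog_top, EReal.add_top_of_ne_bot]
    exact ne_bot_of_le_ne_bot (by simp) (elog_nonneg hx)
  have hmt : x * y ≠ ⊤ := ENNReal.mul_ne_top hxt hyt
  rw [elog_coe hmt, elog_coe hxt, elog_coe hyt, ENNReal.toReal_mul,
    Real.log_mul (by linarith [one_le_toReal hx hxt]) (by linarith [one_le_toReal hy hyt])]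
  exact EReal.coe_add _ _

theorem elog_sq {x : ℝ≥0∞} (hx : 1 ≤ x) : elog (x ^ 2) = 2 * elog x := by
  rw [sq, elog_mul hx hx]
  have h2 : (2 : EReal) = 1 + 1 := by norm_num
  rw [h2, EReal.right_distrib_of_nonneg (by norm_num) (by norm_num), one_mul]

theorem one_le_elog_arg_mul {x y : ℝ≥0∞} (hx : 1 ≤ x) (hy : 1 ≤ y) : 1 ≤ x * y :=
  le_trans hx (le_mul_of_one_le_right zero_le hy)

theorem covering_sq_le {ε : ℝ} (hε : 0 < ε) (s : Set (ℝ × ℝ × ℝ)) :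
    coveringNumber ε s ^ 2 ≤
      729 * coveringNumber ε ((fun p : ℝ × ℝ × ℝ => (p.1, p.2.1)) '' s) *
        coveringNumber ε ((fun p : ℝ × ℝ × ℝ => (p.1, p.2.2)) '' s) *
        coveringNumber ε ((fun p : ℝ × ℝ × ℝ => (p.2.1, p.2.2)) '' s) := by
  rcases s.eq_empty_or_nonempty with rfl | hs
  · simp [coveringNumber_empty]
  set N₁₂ := coveringNumber ε ((fun p : ℝ × ℝ × ℝ => (p.1, p.2.1)) '' s) with h12
  set N₁₃ := coveringNumber ε ((fun p : ℝ × ℝ × ℝ => (p.1, p.2.2)) '' s) with h13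
  set N₂₃ := coveringNumber ε ((fun p : ℝ × ℝ × ℝ => (p.2.1, p.2.2)) '' s) with h23
  have one12 : 1 ≤ N₁₂ := one_le_coveringNumber (hs.image _)
  have one13 : 1 ≤ N₁₃ := one_le_coveringNumber (hs.image _)
  have one23 : 1 ≤ N₂₃ := one_le_coveringNumber (hs.image _)
  by_cases htop : N₁₂ = ⊤ ∨ N₁₃ = ⊤ ∨ N₂₃ = ⊤
  · have : 729 * N₁₂ * N₁₃ * N₂₃ = ⊤ := by
      rcases htop with h | h | h <;> rw [h] <;>
        simp [ENNReal.mul_top, ENNReal.top_mul,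
          (lt_of_lt_of_le zero_lt_one one12).ne', (lt_of_lt_of_le zero_lt_one one13).ne',
          (lt_of_lt_of_le zero_lt_one one23).ne']
    rw [this]; exact le_top
  push_neg at htop
  obtain ⟨T₁₂, hc12, he12⟩ := exists_cover htop.1
  obtain ⟨T₁₃, hc13, he13⟩ := exists_cover htop.2.1
  obtain ⟨T₂₃, hc23, he23⟩ := exists_cover htop.2.2
  rw [h12, h13, h23, ← he12, ← he13, ← he23]
  exact key_estimate hε s T₁₂ T₁₃ T₂₃ hc12 hc13 hc23

theorem ereal_inv_two_mul_two : (2 : EReal)⁻¹ * 2 = 1 := by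
  rw [show (2 : EReal) = ((2 : ℝ) : EReal) by norm_cast, ← EReal.coe_inv, ← EReal.coe_mul]
  norm_num

/-- Multiplication by `2` as an order isomorphism of `EReal`. -/
noncomputable def mulTwo : EReal ≃o EReal where
  toFun x := 2 * x
  invFun x := (2 : EReal)⁻¹ * x
  left_inv x := by
    show (2 : EReal)⁻¹ * (2 * x) = x
    rw [← mul_assoc, ereal_inv_two_mul_two, one_mul]
  right_inv x := by
    show (2 : EReal) * ((2:EReal)⁻¹ * x) = x
    rw [← mul_assoc, EReal.mul_comm (2:EReal), ereal_inv_two_mul_two, one_mul]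
  map_rel_iff' := by
    intro a b
    constructor
    · intro h
      have h0 : (0 : EReal) ≤ (2 : EReal)⁻¹ := by
        rw [show (2 : EReal) = ((2 : ℝ) : EReal) by norm_cast, ← EReal.coe_inv]
        exact_mod_cast by norm_num
      have h' : (2:EReal) * a ≤ 2 * b := h
      have := mul_le_mul_of_nonneg_left h' h0
      rwa [← mul_assoc, ← mul_assoc, ereal_inv_two_mul_two, one_mul, one_mul] at this
    · intro h
      exact mul_le_mul_of_nonneg_left h (by norm_num : (0:EReal) ≤ 2)

theorem two_mul_limsup (u : ℕ → EReal) :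
    2 * Filter.limsup u Filter.atTop = Filter.limsup (fun n => 2 * u n) Filter.atTop :=
  OrderIso.limsup_apply (g := mulTwo) (u := u)

theorem two_mul_iSup (u : ℕ → EReal) : 2 * ⨆ n, u n = ⨆ n, 2 * u n :=
  map_iSup mulTwo u

theorem limsup_nonneg {u : ℕ → EReal} (h : ∀ᶠ n in atTop, 0 ≤ u n) :
    0 ≤ Filter.limsup u Filter.atTop :=
  le_limsup_of_frequently_le h.frequently

theorem limsup_log_const (C : ℝ) :
    Filter.limsup (fun n : ℕ => ((C * (Real.log n)⁻¹ : ℝ) : EReal)) Filter.atTop = 0 := by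
  have hreal : Filter.Tendsto (fun n : ℕ => C * (Real.log n)⁻¹) Filter.atTop (nhds 0) := by
    have : Filter.Tendsto (fun n : ℕ => (Real.log n)⁻¹) Filter.atTop (nhds 0) :=
      (Real.tendsto_log_atTop.comp tendsto_natCast_atTop_atTop).inv_tendsto_atTop
    simpa using this.const_mul C
  have h : Filter.Tendsto (fun n : ℕ => ((C * (Real.log n)⁻¹ : ℝ) : EReal))
      Filter.atTop (nhds ((0:ℝ) : EReal)) := (EReal.tendsto_coe (α := ℕ)).2 hreal
  simpa using h.limsup_eq

theorem inv_log_nonneg {n : ℕ} (hn : 1 ≤ n) : (0 : EReal) ≤ (((Real.log n)⁻¹ : ℝ) : EReal) := by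
  apply EReal.coe_nonneg.2
  apply inv_nonneg.2
  exact Real.log_natCast_nonneg n

theorem ubd_term_nonneg {α : Type*} [PseudoMetricSpace α] (s : Set α) {n : ℕ} (hn : 1 ≤ n) :
    0 ≤ elog (coveringNumber (1 / n) s) * (((Real.log n)⁻¹ : ℝ) : EReal) := by
  rcases s.eq_empty_or_nonempty with rfl | hs
  · rw [coveringNumber_empty, elog_zero, zero_mul]
  · exact mul_nonneg (elog_nonneg (one_le_coveringNumber hs)) (inv_log_nonneg hn)

theorem upperBoxDim_nonneg {α : Type*} [PseudoMetricSpace α] (s : Set α) :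
    0 ≤ upperBoxDim s :=
  limsup_nonneg (by filter_upwards [eventually_ge_atTop 1] with n hn
    using ubd_term_nonneg s hn)

theorem upperBoxDim_empty {α : Type*} [PseudoMetricSpace α] :
    upperBoxDim (∅ : Set α) = 0 := by
  have : ∀ n : ℕ, elog (coveringNumber (1 / n) (∅ : Set α)) * (((Real.log n)⁻¹ : ℝ) : EReal)
      = 0 := by
    intro n; rw [coveringNumber_empty, elog_zero, zero_mul]
  unfold upperBoxDim
  simp only [this]
  exact limsup_const 0

theorem upperBoxDim_mono {α : Type*} [PseudoMetricSpace α] {s s' : Set α} (h : s ⊆ s') :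
    upperBoxDim s ≤ upperBoxDim s' := by
  apply limsup_le_limsup
  · filter_upwards [eventually_ge_atTop 1] with n hn
    rcases s.eq_empty_or_nonempty with rfl | hs
    · rw [coveringNumber_empty, elog_zero, zero_mul]
      exact ubd_term_nonneg s' hn
    · exact mul_le_mul_of_nonneg_right
        (elog_mono (one_le_coveringNumber hs) (coveringNumber_mono h)) (inv_log_nonneg hn)
  · isBoundedDefault
  · isBoundedDefault

theorem upperBoxDim_ineq (s : Set (ℝ × ℝ × ℝ)) :
    2 * upperBoxDim s ≤
      upperBoxDim ((fun p : ℝ × ℝ × ℝ => (p.1, p.2.1)) '' s) +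
      upperBoxDim ((fun p : ℝ × ℝ × ℝ => (p.1, p.2.2)) '' s) +
      upperBoxDim ((fun p : ℝ × ℝ × ℝ => (p.2.1, p.2.2)) '' s) := by
  rcases s.eq_empty_or_nonempty with rfl | hs
  · simp [upperBoxDim_empty]
  set t : ℕ → EReal := fun n => (((Real.log n)⁻¹ : ℝ) : EReal) with ht
  set a : ℕ → EReal := fun n => elog (coveringNumber (1 / n) s) * t n with ha
  set b : ℕ → EReal :=
    fun n => elog (coveringNumber (1 / n) ((fun p : ℝ × ℝ × ℝ => (p.1, p.2.1)) '' s)) * t n with hb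
  set c : ℕ → EReal :=
    fun n => elog (coveringNumber (1 / n) ((fun p : ℝ × ℝ × ℝ => (p.1, p.2.2)) '' s)) * t n with hc
  set d : ℕ → EReal :=
    fun n => elog (coveringNumber (1 / n) ((fun p : ℝ × ℝ × ℝ => (p.2.1, p.2.2)) '' s)) * t n with hd
  set g : ℕ → EReal := fun n => ((Real.log 729 * (Real.log n)⁻¹ : ℝ) : EReal) with hg
  have hg_eq : ∀ n : ℕ, g n = elog 729 * t n := by
    intro n
    rw [hg, ht, elog_coe (by simp : (729 : ℝ≥0∞) ≠ ⊤)]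
    have : ((729 : ℝ≥0∞)).toReal = (729 : ℝ) := by simp
    rw [this, ← EReal.coe_mul]
  -- pointwise bound
  have hpt : ∀ n : ℕ, 1 ≤ n → 2 * a n ≤ g n + b n + c n + d n := by
    intro n hn
    have hεpos : (0:ℝ) < 1 / n := by
      apply one_div_pos.2; exact_mod_cast Nat.pos_of_ne_zero (by omega)
    set N := coveringNumber (1 / (n:ℝ)) s with hN
    set N₁₂ := coveringNumber (1 / (n:ℝ)) ((fun p : ℝ × ℝ × ℝ => (p.1, p.2.1)) '' s) with hN12
    set N₁₃ := coveringNumber (1 / (n:ℝ)) ((fun p : ℝ × ℝ × ℝ => (p.1, p.2.2)) '' s) with hN13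
    set N₂₃ := coveringNumber (1 / (n:ℝ)) ((fun p : ℝ × ℝ × ℝ => (p.2.1, p.2.2)) '' s) with hN23
    have oneN : 1 ≤ N := one_le_coveringNumber hs
    have one12 : 1 ≤ N₁₂ := one_le_coveringNumber (hs.image _)
    have one13 : 1 ≤ N₁₃ := one_le_coveringNumber (hs.image _)
    have one23 : 1 ≤ N₂₃ := one_le_coveringNumber (hs.image _)
    have one729 : (1:ℝ≥0∞) ≤ 729 := by norm_num
    have h1 : 1 ≤ (729 : ℝ≥0∞) * N₁₂ := le_trans one729 (le_mul_of_one_le_right zero_le one12)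
    have h2 : 1 ≤ (729 : ℝ≥0∞) * N₁₂ * N₁₃ := le_trans h1 (le_mul_of_one_le_right zero_le one13)
    have key : elog (N ^ 2) ≤ elog 729 + elog N₁₂ + elog N₁₃ + elog N₂₃ := by
      calc elog (N ^ 2) ≤ elog (729 * N₁₂ * N₁₃ * N₂₃) := by
            apply elog_mono (le_trans oneN (by
              rw [sq]; exact le_mul_of_one_le_right zero_le oneN))
            exact covering_sq_le hεpos s
        _ = elog 729 + elog N₁₂ + elog N₁₃ + elog N₂₃ := by
            rw [elog_mul h2 one23, elog_mul h1 one13, elog_mul one729 one12]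
    have htn : 0 ≤ t n := inv_log_nonneg hn
    have e729 : 0 ≤ elog (729 : ℝ≥0∞) := elog_nonneg one729
    have e12 : 0 ≤ elog N₁₂ := elog_nonneg one12
    have e13 : 0 ≤ elog N₁₃ := elog_nonneg one13
    calc 2 * a n = elog (N ^ 2) * t n := by
          rw [ha]
          show 2 * (elog N * t n) = _
          rw [← mul_assoc, ← elog_sq oneN]
      _ ≤ (elog 729 + elog N₁₂ + elog N₁₃ + elog N₂₃) * t n :=
          mul_le_mul_of_nonneg_right key htn
      _ = g n + b n + c n + d n := by
          rw [EReal.right_distrib_of_nonneg (add_nonneg (add_nonneg e729 e12) e13)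
              (elog_nonneg one23),
            EReal.right_distrib_of_nonneg (add_nonneg e729 e12) e13,
            EReal.right_distrib_of_nonneg e729 e12, hg_eq n]
  -- limsup bounds
  have hg0 : limsup g atTop = 0 := limsup_log_const _
  have hgnn : ∀ᶠ n in atTop, 0 ≤ g n := by
    filter_upwards [eventually_ge_atTop 1] with n hn
    rw [hg_eq n]
    exact mul_nonneg (elog_nonneg (by norm_num)) (inv_log_nonneg hn)
  have hbnn : ∀ᶠ n in atTop, 0 ≤ b n := by
    filter_upwards [eventually_ge_atTop 1] with n hn using ubd_term_nonneg _ hn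
  have hcnn : ∀ᶠ n in atTop, 0 ≤ c n := by
    filter_upwards [eventually_ge_atTop 1] with n hn using ubd_term_nonneg _ hn
  have hgbc_nn : ∀ᶠ n in atTop, 0 ≤ (g + b + c) n := by
    filter_upwards [hgnn, hbnn, hcnn] with n h1 h2 h3
    exact add_nonneg (add_nonneg h1 h2) h3
  have hgb_nn : ∀ᶠ n in atTop, 0 ≤ (g + b) n := by
    filter_upwards [hgnn, hbnn] with n h1 h2
    exact add_nonneg h1 h2
  have step1 : limsup (g + b + c + d) atTop ≤
      limsup (g + b + c) atTop + limsup d atTop :=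
    EReal.limsup_add_le
      (Or.inl (ne_bot_of_le_ne_bot (by simp) (limsup_nonneg hgbc_nn)))
      (Or.inr (ne_bot_of_le_ne_bot (by simp) (upperBoxDim_nonneg _)))
  have step2 : limsup (g + b + c) atTop ≤ limsup (g + b) atTop + limsup c atTop :=
    EReal.limsup_add_le
      (Or.inl (ne_bot_of_le_ne_bot (by simp) (limsup_nonneg hgb_nn)))
      (Or.inr (ne_bot_of_le_ne_bot (by simp) (upperBoxDim_nonneg _)))
  have step3 : limsup (g + b) atTop ≤ limsup g atTop + limsup b atTop :=
    EReal.limsup_add_le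
      (Or.inl (ne_bot_of_le_ne_bot (by simp) (limsup_nonneg hgnn)))
      (Or.inr (ne_bot_of_le_ne_bot (by simp) (upperBoxDim_nonneg _)))
  have main : 2 * limsup a atTop ≤ limsup (g + b + c + d) atTop := by
    rw [two_mul_limsup]
    apply limsup_le_limsup
    · filter_upwards [eventually_ge_atTop 1] with n hn
      exact hpt n hn
    · isBoundedDefault
    · isBoundedDefault
  have : 2 * limsup a atTop ≤ limsup b atTop + limsup c atTop + limsup d atTop := by
    refine main.trans (step1.trans ?_)
    have := add_le_add_left (step2.trans (add_le_add_left step3 _)) (limsup d atTop)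
    refine this.trans ?_
    rw [hg0, zero_add]
  exact this

theorem packingDim_le_of_cover {α : Type*} [PseudoMetricSpace α] {s : Set α}
    {c : ℕ → Set α} (h : s ⊆ ⋃ n, c n) :
    packingDim s ≤ ⨆ n, upperBoxDim (c n) := iInf₂_le c h

theorem packingDim_nonneg {α : Type*} [PseudoMetricSpace α] (s : Set α) :
    0 ≤ packingDim s :=
  le_iInf₂ fun c _ => le_trans (upperBoxDim_nonneg (c 0)) (le_iSup (fun n => upperBoxDim (c n)) 0)

theorem ereal_split {x y s : EReal} (hx : 0 ≤ x) (hy : 0 ≤ y) (h : x + y < s) :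
    ∃ x' > x, ∃ y' > y, x' + y' ≤ s := by
  have hxt : x ≠ ⊤ := by
    rintro rfl
    rw [EReal.top_add_of_ne_bot (ne_bot_of_le_ne_bot (by simp) hy)] at h
    exact not_top_lt h
  have hyt : y ≠ ⊤ := by
    rintro rfl
    rw [EReal.add_top_of_ne_bot (ne_bot_of_le_ne_bot (by simp) hx)] at h
    exact not_top_lt h
  lift x to ℝ using ⟨hxt, ne_bot_of_le_ne_bot (by simp) hx⟩
  lift y to ℝ using ⟨hyt, ne_bot_of_le_ne_bot (by simp) hy⟩
  induction s with
  | bot => exact absurd h (by simp [← EReal.coe_add])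
  | coe r =>
    have hr : x + y < r := by exact_mod_cast (by exact_mod_cast h : ((x + y : ℝ) : EReal) < r)
    refine ⟨((x + (r - (x + y)) / 2 : ℝ) : EReal), by
        exact_mod_cast by linarith, ((y + (r - (x + y)) / 2 : ℝ) : EReal), by
        exact_mod_cast by linarith, ?_⟩
    rw [← EReal.coe_add]
    exact_mod_cast by linarith
  | top =>
    exact ⟨((x + 1 : ℝ) : EReal), by exact_mod_cast by linarith,
      ((y + 1 : ℝ) : EReal), by exact_mod_cast by linarith, le_top⟩

theorem le_add₃ {z x y w : EReal} (hx : 0 ≤ x) (hy : 0 ≤ y) (hw : 0 ≤ w)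
    (h : ∀ x' > x, ∀ y' > y, ∀ w' > w, z ≤ x' + y' + w') : z ≤ x + y + w := by
  apply EReal.le_add_of_forall_gt
    (Or.inl (ne_bot_of_le_ne_bot (by simp) (add_nonneg hx hy)))
    (Or.inr (ne_bot_of_le_ne_bot (by simp) hw))
  intro u hu w' hw'
  obtain ⟨x', hx', y', hy', hsum⟩ := ereal_split hx hy hu
  exact (h x' hx' y' hy' w' hw').trans (add_le_add_left hsum w')

end Aux

/-- For `S ⊆ ℝ³` and its three two-dimensional coordinate projections,
`2·dim_p S ≤ dim_p S₁₂ + dim_p S₁₃ + dim_p S₂₃`. -/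
theorem packingDim_proj_ineq (S : Set (ℝ × ℝ × ℝ)) :
    2 * packingDim S ≤
      packingDim ((fun p : ℝ × ℝ × ℝ => (p.1, p.2.1)) '' S) +
      packingDim ((fun p : ℝ × ℝ × ℝ => (p.1, p.2.2)) '' S) +
      packingDim ((fun p : ℝ × ℝ × ℝ => (p.2.1, p.2.2)) '' S) := by
  apply le_add₃ (packingDim_nonneg _) (packingDim_nonneg _) (packingDim_nonneg _)
  intro x' hx' y' hy' w' hw'
  rw [packingDim] at hx' hy' hw'
  obtain ⟨c₁, hc₁⟩ := iInf_lt_iff.1 hx'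
  obtain ⟨hcov₁, hval₁⟩ := iInf_lt_iff.1 hc₁
  obtain ⟨c₂, hc₂⟩ := iInf_lt_iff.1 hy'
  obtain ⟨hcov₂, hval₂⟩ := iInf_lt_iff.1 hc₂
  obtain ⟨c₃, hc₃⟩ := iInf_lt_iff.1 hw'
  obtain ⟨hcov₃, hval₃⟩ := iInf_lt_iff.1 hc₃
  set dec : ℕ → ℕ × ℕ × ℕ := fun n => Denumerable.ofNat (ℕ × ℕ × ℕ) n with hdec
  set e : ℕ → Set (ℝ × ℝ × ℝ) := fun n =>
    S ∩ ((fun p : ℝ × ℝ × ℝ => (p.1, p.2.1)) ⁻¹' (c₁ (dec n).1))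
      ∩ ((fun p : ℝ × ℝ × ℝ => (p.1, p.2.2)) ⁻¹' (c₂ (dec n).2.1))
      ∩ ((fun p : ℝ × ℝ × ℝ => (p.2.1, p.2.2)) ⁻¹' (c₃ (dec n).2.2)) with he
  have hcov : S ⊆ ⋃ n, e n := by
    intro p hp
    obtain ⟨i, hi⟩ := Set.mem_iUnion.1 (hcov₁ ⟨p, hp, rfl⟩)
    obtain ⟨j, hj⟩ := Set.mem_iUnion.1 (hcov₂ ⟨p, hp, rfl⟩)
    obtain ⟨k, hk⟩ := Set.mem_iUnion.1 (hcov₃ ⟨p, hp, rfl⟩)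
    refine Set.mem_iUnion.2 ⟨Encodable.encode (i, j, k), ?_⟩
    have hd : dec (Encodable.encode (i, j, k)) = (i, j, k) := by
      rw [hdec]; exact Denumerable.ofNat_encode _
    show p ∈ S ∩ _ ∩ _ ∩ _
    rw [hd]
    exact ⟨⟨⟨hp, hi⟩, hj⟩, hk⟩
  have hmain : ∀ n, 2 * upperBoxDim (e n) ≤ x' + y' + w' := by
    intro n
    refine (upperBoxDim_ineq (e n)).trans ?_
    have h1 : upperBoxDim ((fun p : ℝ × ℝ × ℝ => (p.1, p.2.1)) '' e n) ≤ x' := by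
      refine le_trans (upperBoxDim_mono ?_) (le_trans (le_iSup (fun m => upperBoxDim (c₁ m)) (dec n).1) hval₁.le)
      rintro _ ⟨q, hq, rfl⟩
      exact hq.1.1.2
    have h2 : upperBoxDim ((fun p : ℝ × ℝ × ℝ => (p.1, p.2.2)) '' e n) ≤ y' := by
      refine le_trans (upperBoxDim_mono ?_) (le_trans (le_iSup (fun m => upperBoxDim (c₂ m)) (dec n).2.1) hval₂.le)
      rintro _ ⟨q, hq, rfl⟩
      exact hq.1.2
    have h3 : upperBoxDim ((fun p : ℝ × ℝ × ℝ => (p.2.1, p.2.2)) '' e n) ≤ w' := by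
      refine le_trans (upperBoxDim_mono ?_) (le_trans (le_iSup (fun m => upperBoxDim (c₃ m)) (dec n).2.2) hval₃.le)
      rintro _ ⟨q, hq, rfl⟩
      exact hq.2
    exact add_le_add (add_le_add h1 h2) h3
  calc 2 * packingDim S ≤ 2 * ⨆ n, upperBoxDim (e n) :=
        mul_le_mul_of_nonneg_left (packingDim_le_of_cover hcov) (by norm_num)
    _ = ⨆ n, 2 * upperBoxDim (e n) := two_mul_iSup _
    _ ≤ x' + y' + w' := iSup_le hmain
end
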